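/- Let s ≥ 1 and let A, D¹, D² be s×s real lower-triangular matrices with c = A𝟙 and D¹𝟙 = D²𝟙 = 𝟙 (𝟙 the all-ones vector), let b ∈ ℝ^s, and let J be the s×s shift matrix (J_{ij}=1 if i=j+1, else 0). Assume the order conditions: bᵀ𝟙 = 1; bᵀD¹Jc = bᵀD²c = 1/2; bᵀD¹JAD¹Jc = bᵀD¹JAD²c = bᵀD²AD¹Jc = bᵀD²AD²c = 1/6; bᵀ((D¹Jc)∘(D¹Jc)) = bᵀ((D¹Jc)∘(D²c)) = bᵀ((D²c)∘(D²c)) = 1/3, where ∘ denotes the entrywise product. Let f₁, f₂ : ℝ → ℝ be three times continuously differentiable, let T > 0, and let u : [0,T] → ℝ be differentiable with u'(t) = f₁(u(t))·f₂(u(t)) for all t ∈ [0,T]. For t ∈ [0,T] and τ > 0 define v₀ = u(t), v⁽¹⁾ = f₁(v₀)f₂(v₀)·c ∈ ℝ^s, v⁽²⁾ = f₁'(v₀)f₂(v₀)·A D¹J v⁽¹⁾ + f₁(v₀)f₂'(v₀)·A D² v⁽¹⁾ ∈ ℝ^s, v = v₀𝟙 + τ v⁽¹⁾ + τ² v⁽²⁾,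 and v̂ = v₀𝟙 + τ J v⁽¹⁾ + τ² J v⁽²⁾. Then there exists a constant C > 0 such that for all τ ∈ (0,1] and all t ∈ [0,T] with t + τ ≤ T, one has |u(t+τ) − v₀ − τ Σ_{i=1}^s b_i f₁((D¹v̂)_i) f₂((D²v)_i)| ≤ C τ⁴, and moreover max_{1≤i≤s} |v_i − v₀ − τ Σ_{j=1}^s a_{ij} f₁((D¹v̂)_j) f₂((D²v)_j)| ≤ C τ³. -/

import Mathlib

open Matrix Set


lemma mv_bound {s : ℕ} (M : Matrix (Fin s) (Fin s) ℝ) (x : Fin s → ℝ) (B : ℝ)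
    (hB : 0 ≤ B) (hx : ∀ j, |x j| ≤ B) (i : Fin s) :
    |(M *ᵥ x) i| ≤ (∑ i, ∑ j, |M i j|) * B := by
  have h0 : (M *ᵥ x) i = ∑ j, M i j * x j := by
    simp [Matrix.mulVec, dotProduct]
  rw [h0]
  have h1 : |∑ j, M i j * x j| ≤ ∑ j, |M i j| * B := by
    refine (Finset.abs_sum_le_sum_abs _ _).trans ?_
    refine Finset.sum_le_sum fun j _ => ?_
    rw [abs_mul]
    exact mul_le_mul_of_nonneg_left (hx j) (abs_nonneg _)
  refine h1.trans ?_
  rw [← Finset.sum_mul]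
  refine mul_le_mul_of_nonneg_right ?_ hB
  exact Finset.single_le_sum (f := fun i => ∑ j, |M i j|)
    (fun i _ => Finset.sum_nonneg fun j _ => abs_nonneg _) (Finset.mem_univ i)

lemma mvt_zero {g g' : ℝ → ℝ} {L h : ℝ}
    (hg : ∀ x ∈ Set.uIcc 0 h, HasDerivWithinAt g (g' x) (Set.uIcc 0 h) x)
    (hb : ∀ x ∈ Set.uIcc 0 h, |g' x| ≤ L) :
    |g h - g 0| ≤ L * |h| := by
  have := Convex.norm_image_sub_le_of_norm_hasDerivWithin_le hg hb
    (convex_uIcc 0 h) (Set.left_mem_uIcc) (Set.right_mem_uIcc)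
  simpa [Real.norm_eq_abs] using this

lemma rmul {a b A B : ℝ} (ha : |a| ≤ A) (hb : |b| ≤ B) : |a * b| ≤ A * B := by
  rw [abs_mul]
  exact mul_le_mul ha hb (abs_nonneg _) ((abs_nonneg a).trans ha)

lemma radd {a b A B : ℝ} (ha : |a| ≤ A) (hb : |b| ≤ B) : |a + b| ≤ A + B :=
  (abs_add_le a b).trans (add_le_add ha hb)

lemma abs_uIcc_le {h x : ℝ} (hx : x ∈ Set.uIcc 0 h) : |x| ≤ |h| := by
  rcases le_total 0 h with h0 | h0
  · rw [Set.uIcc_of_le h0] at hx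
    rw [abs_of_nonneg hx.1, abs_of_nonneg h0]; exact hx.2
  · rw [Set.uIcc_of_ge h0] at hx
    rw [abs_of_nonpos hx.2, abs_of_nonpos h0]; exact neg_le_neg hx.1

/-- second-order Taylor bound for a `C³` function -/
lemma taylor2 {f : ℝ → ℝ} (hf : ContDiff ℝ 3 f) (N' M : ℝ) (hM0 : 0 ≤ M)
    (hM : ∀ x : ℝ, |x| ≤ N' → |deriv (deriv (deriv f)) x| ≤ M) :
    ∀ w h : ℝ, |w| + |h| ≤ N' →
      |f (w + h) - (f w + deriv f w * h + deriv (deriv f) w * (h ^ 2 / 2))|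
        ≤ M * |h| ^ 3 := by
  have hd1 : ContDiff ℝ 2 (deriv f) := by
    have := (contDiff_succ_iff_deriv (n := 2)).mp (by exact_mod_cast hf)
    exact this.2.2
  have hd2 : ContDiff ℝ 1 (deriv (deriv f)) := by
    have := (contDiff_succ_iff_deriv (n := 1)).mp (by exact_mod_cast hd1)
    exact this.2.2
  have hdf : Differentiable ℝ f := hf.differentiable (by norm_num)
  have hdf1 : Differentiable ℝ (deriv f) := hd1.differentiable (by norm_num)
  have hdf2 : Differentiable ℝ (deriv (deriv f)) := hd2.differentiable (by norm_num)
  intro w h hwh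
  have hin : ∀ x ∈ Set.uIcc (0:ℝ) h, |w + x| ≤ N' := by
    intro x hx
    calc |w + x| ≤ |w| + |x| := abs_add_le _ _
    _ ≤ |w| + |h| := by linarith [abs_uIcc_le hx]
    _ ≤ N' := hwh
  -- level 2
  have lev2 : ∀ x ∈ Set.uIcc (0:ℝ) h,
      |deriv (deriv f) (w + x) - deriv (deriv f) (w + 0)| ≤ M * |h| := by
    intro x hx
    have hsub : Set.uIcc (0:ℝ) x ⊆ Set.uIcc 0 h :=
      Set.uIcc_subset_uIcc Set.left_mem_uIcc hx
    have key : |deriv (deriv f) (w + x) - deriv (deriv f) (w + 0)| ≤ M * |x| := by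
      refine mvt_zero (g := fun y => deriv (deriv f) (w + y))
        (g' := fun y => deriv (deriv (deriv f)) (w + y) * 1) ?_ ?_
      · intro y hy
        exact (((hdf2 (w + y)).hasDerivAt.comp y
          ((hasDerivAt_id y).const_add w)).hasDerivWithinAt).mono hsub
      · intro y hy
        simpa using hM _ (hin y (hsub hy))
    exact key.trans (mul_le_mul_of_nonneg_left (abs_uIcc_le hx) hM0)
  -- level 1
  have lev1 : ∀ x ∈ Set.uIcc (0:ℝ) h,
      |(deriv f (w + x) - (deriv f (w + 0) + deriv (deriv f) (w + 0) * x))|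
        ≤ (M * |h|) * |h| := by
    intro x hx
    have hsub : Set.uIcc (0:ℝ) x ⊆ Set.uIcc 0 h :=
      Set.uIcc_subset_uIcc Set.left_mem_uIcc hx
    have key : |(deriv f (w + x) - (deriv f w + deriv (deriv f) (w + 0) * x)) -
        (deriv f (w + 0) - (deriv f w + deriv (deriv f) (w + 0) * 0))|
        ≤ (M * |h|) * |x| := by
      refine mvt_zero
        (g := fun y => deriv f (w + y) - (deriv f w + deriv (deriv f) (w + 0) * y))
        (g' := fun y => deriv (deriv f) (w + y) * 1 - deriv (deriv f) (w + 0)) ?_ ?_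
      · intro y hy
        have h1 : HasDerivAt (fun y => deriv f (w + y))
            (deriv (deriv f) (w + y) * 1) y :=
          (hdf1 (w + y)).hasDerivAt.comp y ((hasDerivAt_id y).const_add w)
        have h2 : HasDerivAt (fun y : ℝ => deriv f w + deriv (deriv f) (w + 0) * y)
            (deriv (deriv f) (w + 0)) y := by
          simpa using ((hasDerivAt_id y).const_mul (deriv (deriv f) (w + 0))).const_add
            (deriv f w)
        exact ((h1.sub h2).hasDerivWithinAt).mono hsub
      · intro y hy
        have := lev2 y (hsub hy)
        calc |deriv (deriv f) (w + y) * 1 - deriv (deriv f) (w + 0)|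
            = |deriv (deriv f) (w + y) - deriv (deriv f) (w + 0)| := by rw [mul_one]
        _ ≤ M * |h| := this
    have e1 : deriv f (w + x) - (deriv f (w + 0) + deriv (deriv f) (w + 0) * x)
        = (deriv f (w + x) - (deriv f w + deriv (deriv f) (w + 0) * x)) -
          (deriv f (w + 0) - (deriv f w + deriv (deriv f) (w + 0) * 0)) := by
      rw [add_zero]; ring
    rw [e1]
    refine key.trans ?_
    exact mul_le_mul_of_nonneg_left (abs_uIcc_le hx)
      (by positivity)
  -- level 0
  have key : |(f (w + h) - (f w + deriv f (w + 0) * h + deriv (deriv f) (w + 0) * (h ^ 2 / 2)))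
      - (f (w + 0) - (f w + deriv f (w + 0) * 0 + deriv (deriv f) (w + 0) * (0 ^ 2 / 2)))|
      ≤ (M * |h| * |h|) * |h| := by
    refine mvt_zero
      (g := fun y => f (w + y) -
        (f w + deriv f (w + 0) * y + deriv (deriv f) (w + 0) * (y ^ 2 / 2)))
      (g' := fun y => deriv f (w + y) * 1 -
        (deriv f (w + 0) + deriv (deriv f) (w + 0) * y)) ?_ ?_
    · intro y hy
      have h1 : HasDerivAt (fun y => f (w + y)) (deriv f (w + y) * 1) y :=
        (hdf (w + y)).hasDerivAt.comp y ((hasDerivAt_id y).const_add w)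
      have h2 : HasDerivAt (fun y : ℝ =>
          f w + deriv f (w + 0) * y + deriv (deriv f) (w + 0) * (y ^ 2 / 2))
          (deriv f (w + 0) + deriv (deriv f) (w + 0) * y) y := by
        have hq : HasDerivAt (fun y : ℝ => y ^ 2 / 2) y y := by
          simpa using (hasDerivAt_pow 2 y).div_const 2
        have := (((hasDerivAt_id y).const_mul (deriv f (w + 0))).const_add (f w)).add
          (hq.const_mul (deriv (deriv f) (w + 0)))
        simpa [mul_comm, Pi.add_def] using this
      exact (h1.sub h2).hasDerivWithinAt
    · intro y hy
      have := lev1 y hy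
      calc |deriv f (w + y) * 1 - (deriv f (w + 0) + deriv (deriv f) (w + 0) * y)|
          = |deriv f (w + y) - (deriv f (w + 0) + deriv (deriv f) (w + 0) * y)| := by
            rw [mul_one]
      _ ≤ M * |h| * |h| := this
  have e2 : f (w + h) - (f w + deriv f w * h + deriv (deriv f) w * (h ^ 2 / 2))
      = (f (w + h) - (f w + deriv f (w + 0) * h + deriv (deriv f) (w + 0) * (h ^ 2 / 2)))
      - (f (w + 0) - (f w + deriv f (w + 0) * 0 + deriv (deriv f) (w + 0) * (0 ^ 2 / 2))) := by
    rw [add_zero]; ring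
  rw [e2]
  refine key.trans (le_of_eq ?_)
  ring


private lemma num1 {CM τ : ℝ} (hCM : 1 ≤ CM) (hτ0 : 0 < τ) (hτ1 : τ ≤ 1) :
    τ ^ 3 * (100 * CM ^ 6) + (7 * CM ^ 3 * (8 * CM ^ 4 * τ ^ 3)
      + (8 * CM ^ 4 * τ ^ 3 * (7 * CM ^ 3) + 8 * CM ^ 4 * τ ^ 3 * (8 * CM ^ 4 * τ ^ 3)))
      ≤ 300 * CM ^ 8 * τ ^ 3 := by
  have hCM0 : (0:ℝ) < CM := lt_of_lt_of_le one_pos hCM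
  have h68 : CM ^ 6 ≤ CM ^ 8 := pow_le_pow_right₀ hCM (by norm_num)
  have h78 : CM ^ 7 ≤ CM ^ 8 := pow_le_pow_right₀ hCM (by norm_num)
  have hτ3 : 0 < τ ^ 3 := pow_pos hτ0 3
  have hone : τ ^ 3 ≤ 1 := pow_le_one₀ hτ0.le hτ1
  have hτ6 : τ ^ 3 * τ ^ 3 ≤ τ ^ 3 := by
    calc τ ^ 3 * τ ^ 3 ≤ 1 * τ ^ 3 := mul_le_mul_of_nonneg_right hone hτ3.le
    _ = τ ^ 3 := one_mul _
  nlinarith [mul_le_mul_of_nonneg_right h68 hτ3.le,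
    mul_le_mul_of_nonneg_right h78 hτ3.le,
    mul_le_mul_of_nonneg_left hτ6 (by positivity : (0:ℝ) ≤ 64 * CM ^ 8)]

private lemma num4 {CM : ℝ} (hCM : 1 ≤ CM) :
    CM * CM * CM + CM * CM * CM + CM * CM * (CM * CM) + CM * CM * (CM * CM)
      + CM * CM * (CM * CM) ≤ 5 * CM ^ 4 := by nlinarith

private lemma num2 {CM : ℝ} (hCM : 1 ≤ CM) :
    CM + CM * (2 * CM) + CM * ((2 * CM) * (2 * CM)) ≤ 7 * CM ^ 3 := by nlinarith

private lemma num3 {CM : ℝ} (hCM : 1 ≤ CM) :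
    CM * CM * (CM * CM + CM * CM + 1 * (CM * CM))
    + CM * CM * (CM * CM + CM * CM + 1 * (CM * CM))
    + CM * CM * (CM * CM + CM * CM + 1 * (CM * CM))
    + CM * CM * ((CM + 1 * CM) * ((CM + 1 * CM) * (CM + 1 * CM)))
    + CM * CM * (((CM + 1 * CM) * (CM + 1 * CM)) * (CM + 1 * CM))
    + CM * CM * (1 * (((CM + 1 * CM) * (CM + 1 * CM)) * ((CM + 1 * CM) * (CM + 1 * CM))))
      ≤ 100 * CM ^ 6 := by
  have h46 : CM ^ 4 ≤ CM ^ 6 := pow_le_pow_right₀ hCM (by norm_num)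
  have h56 : CM ^ 5 ≤ CM ^ 6 := pow_le_pow_right₀ hCM (by norm_num)
  nlinarith

/-- key pointwise product expansion bound.  Here `R1, R2` denote *half* second
derivatives. -/
lemma key_alg {P1 Q1 R1 P2 Q2 R2 α β γ δ τ CM x y : ℝ}
    (hCM : 1 ≤ CM)
    (hP1 : |P1| ≤ CM) (hQ1 : |Q1| ≤ CM) (hR1 : |R1| ≤ CM)
    (hP2 : |P2| ≤ CM) (hQ2 : |Q2| ≤ CM) (hR2 : |R2| ≤ CM)
    (hα : |α| ≤ CM) (hβ : |β| ≤ CM) (hγ : |γ| ≤ CM) (hδ : |δ| ≤ CM)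
    (hτ0 : 0 < τ) (hτ1 : τ ≤ 1)
    (hx : |x - (P1 + Q1 * (τ * α + τ ^ 2 * β) + R1 * (τ * α + τ ^ 2 * β) ^ 2)|
      ≤ CM * |τ * α + τ ^ 2 * β| ^ 3)
    (hy : |y - (P2 + Q2 * (τ * γ + τ ^ 2 * δ) + R2 * (τ * γ + τ ^ 2 * δ) ^ 2)|
      ≤ CM * |τ * γ + τ ^ 2 * δ| ^ 3) :
    |x * y - (P1 * P2 + τ * (Q1 * P2 * α + P1 * Q2 * γ)
        + τ ^ 2 * (Q1 * P2 * β + P1 * Q2 * δ + R1 * P2 * (α * α)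
            + P1 * R2 * (γ * γ) + Q1 * Q2 * (α * γ)))|
      ≤ 300 * CM ^ 8 * τ ^ 3 := by
  have hτa : |τ| = τ := abs_of_pos hτ0
  have hτle : |τ| ≤ 1 := by rw [hτa]; exact hτ1
  have hCM0 : (0:ℝ) < CM := lt_of_lt_of_le one_pos hCM
  have hττ : τ ^ 2 ≤ τ := by
    calc τ ^ 2 = τ * τ := sq τ
    _ ≤ τ * 1 := mul_le_mul_of_nonneg_left hτ1 hτ0.le
    _ = τ := mul_one τ
  have hX : |τ * α + τ ^ 2 * β| ≤ 2 * CM * τ := by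
    have h1 : |τ * α| ≤ τ * CM := by
      rw [abs_mul, hτa]; exact mul_le_mul_of_nonneg_left hα hτ0.le
    have h2 : |τ ^ 2 * β| ≤ τ * CM := by
      rw [abs_mul, abs_pow, hτa]
      calc τ ^ 2 * |β| ≤ τ ^ 2 * CM := mul_le_mul_of_nonneg_left hβ (sq_nonneg τ)
      _ ≤ τ * CM := mul_le_mul_of_nonneg_right hττ hCM0.le
    calc |τ * α + τ ^ 2 * β| ≤ τ * CM + τ * CM := radd h1 h2
    _ = 2 * CM * τ := by ring
  have hY : |τ * γ + τ ^ 2 * δ| ≤ 2 * CM * τ := by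
    have h1 : |τ * γ| ≤ τ * CM := by
      rw [abs_mul, hτa]; exact mul_le_mul_of_nonneg_left hγ hτ0.le
    have h2 : |τ ^ 2 * δ| ≤ τ * CM := by
      rw [abs_mul, abs_pow, hτa]
      calc τ ^ 2 * |δ| ≤ τ ^ 2 * CM := mul_le_mul_of_nonneg_left hδ (sq_nonneg τ)
      _ ≤ τ * CM := mul_le_mul_of_nonneg_right hττ hCM0.le
    calc |τ * γ + τ ^ 2 * δ| ≤ τ * CM + τ * CM := radd h1 h2
    _ = 2 * CM * τ := by ring
  have hXle : |τ * α + τ ^ 2 * β| ≤ 2 * CM :=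
    hX.trans (by simpa using mul_le_of_le_one_right (by positivity : (0:ℝ) ≤ 2 * CM) hτ1)
  have hYle : |τ * γ + τ ^ 2 * δ| ≤ 2 * CM :=
    hY.trans (by simpa using mul_le_of_le_one_right (by positivity : (0:ℝ) ≤ 2 * CM) hτ1)
  have hρ1 : |x - (P1 + Q1 * (τ * α + τ ^ 2 * β) + R1 * (τ * α + τ ^ 2 * β) ^ 2)|
      ≤ 8 * CM ^ 4 * τ ^ 3 := by
    refine hx.trans ?_
    have h3 : |τ * α + τ ^ 2 * β| ^ 3 ≤ (2 * CM * τ) ^ 3 :=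
      pow_le_pow_left₀ (abs_nonneg _) hX 3
    calc CM * |τ * α + τ ^ 2 * β| ^ 3 ≤ CM * (2 * CM * τ) ^ 3 :=
          mul_le_mul_of_nonneg_left h3 hCM0.le
    _ = 8 * CM ^ 4 * τ ^ 3 := by ring
  have hρ2 : |y - (P2 + Q2 * (τ * γ + τ ^ 2 * δ) + R2 * (τ * γ + τ ^ 2 * δ) ^ 2)|
      ≤ 8 * CM ^ 4 * τ ^ 3 := by
    refine hy.trans ?_
    have h3 : |τ * γ + τ ^ 2 * δ| ^ 3 ≤ (2 * CM * τ) ^ 3 :=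
      pow_le_pow_left₀ (abs_nonneg _) hY 3
    calc CM * |τ * γ + τ ^ 2 * δ| ^ 3 ≤ CM * (2 * CM * τ) ^ 3 :=
          mul_le_mul_of_nonneg_left h3 hCM0.le
    _ = 8 * CM ^ 4 * τ ^ 3 := by ring
  have ha1 : |P1 + Q1 * (τ * α + τ ^ 2 * β) + R1 * (τ * α + τ ^ 2 * β) ^ 2|
      ≤ 7 * CM ^ 3 := by
    have h2 : |(τ * α + τ ^ 2 * β) ^ 2| ≤ (2 * CM) * (2 * CM) := by
      rw [pow_two]; exact rmul hXle hXle
    exact (radd (radd hP1 (rmul hQ1 hXle)) (rmul hR1 h2)).trans (num2 hCM)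
  have ha2 : |P2 + Q2 * (τ * γ + τ ^ 2 * δ) + R2 * (τ * γ + τ ^ 2 * δ) ^ 2|
      ≤ 7 * CM ^ 3 := by
    have h2 : |(τ * γ + τ ^ 2 * δ) ^ 2| ≤ (2 * CM) * (2 * CM) := by
      rw [pow_two]; exact rmul hYle hYle
    exact (radd (radd hP2 (rmul hQ2 hYle)) (rmul hR2 h2)).trans (num2 hCM)
  have he1 : |α + τ * β| ≤ CM + 1 * CM := radd hα (rmul hτle hβ)
  have he2 : |γ + τ * δ| ≤ CM + 1 * CM := radd hγ (rmul hτle hδ)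
  have hΦb : |Q1 * Q2 * (α * δ + β * γ + τ * (β * δ))
      + R1 * P2 * (α * β + β * α + τ * (β * β))
      + P1 * R2 * (γ * δ + δ * γ + τ * (δ * δ))
      + Q1 * R2 * ((α + τ * β) * ((γ + τ * δ) * (γ + τ * δ)))
      + R1 * Q2 * (((α + τ * β) * (α + τ * β)) * (γ + τ * δ))
      + R1 * R2 * (τ * (((α + τ * β) * (α + τ * β)) * ((γ + τ * δ) * (γ + τ * δ))))|
      ≤ 100 * CM ^ 6 := by
    refine le_trans ?_ (num3 hCM)
    refine radd (radd (radd (radd (radd ?_ ?_) ?_) ?_) ?_) ?_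
    · exact rmul (rmul hQ1 hQ2)
        (radd (radd (rmul hα hδ) (rmul hβ hγ)) (rmul hτle (rmul hβ hδ)))
    · exact rmul (rmul hR1 hP2)
        (radd (radd (rmul hα hβ) (rmul hβ hα)) (rmul hτle (rmul hβ hβ)))
    · exact rmul (rmul hP1 hR2)
        (radd (radd (rmul hγ hδ) (rmul hδ hγ)) (rmul hτle (rmul hδ hδ)))
    · exact rmul (rmul hQ1 hR2) (rmul he1 (rmul he2 he2))
    · exact rmul (rmul hR1 hQ2) (rmul (rmul he1 he1) he2)
    · exact rmul (rmul hR1 hR2) (rmul hτle (rmul (rmul he1 he1) (rmul he2 he2)))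
  have hfact : (P1 + Q1 * (τ * α + τ ^ 2 * β) + R1 * (τ * α + τ ^ 2 * β) ^ 2)
        * (P2 + Q2 * (τ * γ + τ ^ 2 * δ) + R2 * (τ * γ + τ ^ 2 * δ) ^ 2)
      - (P1 * P2 + τ * (Q1 * P2 * α + P1 * Q2 * γ)
        + τ ^ 2 * (Q1 * P2 * β + P1 * Q2 * δ + R1 * P2 * (α * α)
            + P1 * R2 * (γ * γ) + Q1 * Q2 * (α * γ)))
      = τ ^ 3 * (Q1 * Q2 * (α * δ + β * γ + τ * (β * δ))
      + R1 * P2 * (α * β + β * α + τ * (β * β))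
      + P1 * R2 * (γ * δ + δ * γ + τ * (δ * δ))
      + Q1 * R2 * ((α + τ * β) * ((γ + τ * δ) * (γ + τ * δ)))
      + R1 * Q2 * (((α + τ * β) * (α + τ * β)) * (γ + τ * δ))
      + R1 * R2 * (τ * (((α + τ * β) * (α + τ * β)) * ((γ + τ * δ) * (γ + τ * δ))))) := by
    ring
  have hτ3 : |τ ^ 3 * (Q1 * Q2 * (α * δ + β * γ + τ * (β * δ))
      + R1 * P2 * (α * β + β * α + τ * (β * β))
      + P1 * R2 * (γ * δ + δ * γ + τ * (δ * δ))
      + Q1 * R2 * ((α + τ * β) * ((γ + τ * δ) * (γ + τ * δ)))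
      + R1 * Q2 * (((α + τ * β) * (α + τ * β)) * (γ + τ * δ))
      + R1 * R2 * (τ * (((α + τ * β) * (α + τ * β)) * ((γ + τ * δ) * (γ + τ * δ)))))|
      ≤ τ ^ 3 * (100 * CM ^ 6) := by
    rw [abs_mul, abs_pow, hτa]
    exact mul_le_mul_of_nonneg_left hΦb (by positivity)
  have hxy : x * y - (P1 * P2 + τ * (Q1 * P2 * α + P1 * Q2 * γ)
        + τ ^ 2 * (Q1 * P2 * β + P1 * Q2 * δ + R1 * P2 * (α * α)
            + P1 * R2 * (γ * γ) + Q1 * Q2 * (α * γ)))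
      = ((P1 + Q1 * (τ * α + τ ^ 2 * β) + R1 * (τ * α + τ ^ 2 * β) ^ 2)
        * (P2 + Q2 * (τ * γ + τ ^ 2 * δ) + R2 * (τ * γ + τ ^ 2 * δ) ^ 2)
      - (P1 * P2 + τ * (Q1 * P2 * α + P1 * Q2 * γ)
        + τ ^ 2 * (Q1 * P2 * β + P1 * Q2 * δ + R1 * P2 * (α * α)
            + P1 * R2 * (γ * γ) + Q1 * Q2 * (α * γ))))
        + ((P1 + Q1 * (τ * α + τ ^ 2 * β) + R1 * (τ * α + τ ^ 2 * β) ^ 2)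
            * (y - (P2 + Q2 * (τ * γ + τ ^ 2 * δ) + R2 * (τ * γ + τ ^ 2 * δ) ^ 2))
          + ((x - (P1 + Q1 * (τ * α + τ ^ 2 * β) + R1 * (τ * α + τ ^ 2 * β) ^ 2))
              * (P2 + Q2 * (τ * γ + τ ^ 2 * δ) + R2 * (τ * γ + τ ^ 2 * δ) ^ 2)
            + (x - (P1 + Q1 * (τ * α + τ ^ 2 * β) + R1 * (τ * α + τ ^ 2 * β) ^ 2))
              * (y - (P2 + Q2 * (τ * γ + τ ^ 2 * δ) + R2 * (τ * γ + τ ^ 2 * δ) ^ 2)))) := by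
    ring
  rw [hxy, hfact]
  refine le_trans (radd hτ3 (radd (rmul ha1 hρ2) (radd (rmul hρ1 ha2) (rmul hρ1 hρ2)))) ?_
  exact num1 hCM hτ0 hτ1

lemma vec_bound {n : ℕ} (x : Fin n → ℝ) : ∃ B, 0 ≤ B ∧ ∀ i, |x i| ≤ B :=
  ⟨∑ i, |x i|, Finset.sum_nonneg fun _ _ => abs_nonneg _,
    fun i => Finset.single_le_sum (f := fun j => |x j|)
      (fun j _ => abs_nonneg _) (Finset.mem_univ i)⟩


set_option maxHeartbeats 4000000 in
theorem stmt0 (s : ℕ) (hs : 1 ≤ s)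
    (A D1 D2 : Matrix (Fin s) (Fin s) ℝ)
    (hAlt : ∀ i j : Fin s, i < j → A i j = 0)
    (hD1lt : ∀ i j : Fin s, i < j → D1 i j = 0)
    (hD2lt : ∀ i j : Fin s, i < j → D2 i j = 0)
    (b : Fin s → ℝ)
    (c : Fin s → ℝ) (hc : c = A *ᵥ fun _ => 1)
    (hD1row : (D1 *ᵥ fun _ => 1) = fun _ => 1)
    (hD2row : (D2 *ᵥ fun _ => 1) = fun _ => 1)
    (J : Matrix (Fin s) (Fin s) ℝ)
    (hJ : J = Matrix.of fun i j : Fin s => if (i : ℕ) = (j : ℕ) + 1 then 1 else 0)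
    (ord1 : ∑ i, b i = 1)
    (ord2a : b ⬝ᵥ (D1 *ᵥ (J *ᵥ c)) = 1 / 2)
    (ord2b : b ⬝ᵥ (D2 *ᵥ c) = 1 / 2)
    (ord3a : b ⬝ᵥ (D1 *ᵥ (J *ᵥ (A *ᵥ (D1 *ᵥ (J *ᵥ c))))) = 1 / 6)
    (ord3b : b ⬝ᵥ (D1 *ᵥ (J *ᵥ (A *ᵥ (D2 *ᵥ c)))) = 1 / 6)
    (ord3c : b ⬝ᵥ (D2 *ᵥ (A *ᵥ (D1 *ᵥ (J *ᵥ c)))) = 1 / 6)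
    (ord3d : b ⬝ᵥ (D2 *ᵥ (A *ᵥ (D2 *ᵥ c))) = 1 / 6)
    (ord3e : b ⬝ᵥ ((D1 *ᵥ (J *ᵥ c)) * (D1 *ᵥ (J *ᵥ c))) = 1 / 3)
    (ord3f : b ⬝ᵥ ((D1 *ᵥ (J *ᵥ c)) * (D2 *ᵥ c)) = 1 / 3)
    (ord3g : b ⬝ᵥ ((D2 *ᵥ c) * (D2 *ᵥ c)) = 1 / 3)
    (f₁ f₂ : ℝ → ℝ) (hf₁ : ContDiff ℝ 3 f₁) (hf₂ : ContDiff ℝ 3 f₂)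
    (T : ℝ) (hT : 0 < T)
    (u : ℝ → ℝ)
    (hu : ∀ t ∈ Set.Icc (0 : ℝ) T,
      HasDerivWithinAt u (f₁ (u t) * f₂ (u t)) (Set.Icc 0 T) t) :
    ∃ C > 0, ∀ τ : ℝ, 0 < τ → τ ≤ 1 → ∀ t ∈ Set.Icc (0 : ℝ) T, t + τ ≤ T →
      let v₀ : ℝ := u t
      let v1 : Fin s → ℝ := (f₁ v₀ * f₂ v₀) • c
      let v2 : Fin s → ℝ :=
        (deriv f₁ v₀ * f₂ v₀) • (A *ᵥ (D1 *ᵥ (J *ᵥ v1)))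
          + (f₁ v₀ * deriv f₂ v₀) • (A *ᵥ (D2 *ᵥ v1))
      let v : Fin s → ℝ := fun i => v₀ + τ * v1 i + τ ^ 2 * v2 i
      let vhat : Fin s → ℝ := fun i => v₀ + τ * (J *ᵥ v1) i + τ ^ 2 * (J *ᵥ v2) i
      |u (t + τ) - v₀
          - τ * ∑ i, b i * (f₁ ((D1 *ᵥ vhat) i) * f₂ ((D2 *ᵥ v) i))| ≤ C * τ ^ 4 ∧
      ∀ i : Fin s,
        |v i - v₀
            - τ * ∑ j, A i j * (f₁ ((D1 *ᵥ vhat) j) * f₂ ((D2 *ᵥ v) j))| ≤ C * τ ^ 3 := by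
  classical
  -- fixed vectors
  set p : Fin s → ℝ := D1 *ᵥ (J *ᵥ c) with hp
  set q : Fin s → ℝ := D2 *ᵥ c with hq
  set r1 : Fin s → ℝ := A *ᵥ p with hr1
  set r2 : Fin s → ℝ := A *ᵥ q with hr2
  set m1 : Fin s → ℝ := D1 *ᵥ (J *ᵥ r1) with hm1
  set m2 : Fin s → ℝ := D1 *ᵥ (J *ᵥ r2) with hm2
  set n1 : Fin s → ℝ := D2 *ᵥ r1 with hn1
  set n2 : Fin s → ℝ := D2 *ᵥ r2 with hn2
  clear_value p q r1 r2 m1 m2 n1 n2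
  -- scalar order conditions
  have osc2a : ∑ i, b i * p i = 1 / 2 := by simpa [dotProduct] using ord2a
  have osc2b : ∑ i, b i * q i = 1 / 2 := by simpa [dotProduct] using ord2b
  have osc3a : ∑ i, b i * m1 i = 1 / 6 := by simpa [dotProduct] using ord3a
  have osc3b : ∑ i, b i * m2 i = 1 / 6 := by simpa [dotProduct] using ord3b
  have osc3c : ∑ i, b i * n1 i = 1 / 6 := by simpa [dotProduct] using ord3c
  have osc3d : ∑ i, b i * n2 i = 1 / 6 := by simpa [dotProduct] using ord3d
  have osc3e : ∑ i, b i * (p i * p i) = 1 / 3 := by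
    simpa [dotProduct] using ord3e
  have osc3f : ∑ i, b i * (p i * q i) = 1 / 3 := by
    simpa [dotProduct] using ord3f
  have osc3g : ∑ i, b i * (q i * q i) = 1 / 3 := by
    simpa [dotProduct] using ord3g
  -- bounds on fixed vectors
  obtain ⟨Bp, hBp0, hpb⟩ := vec_bound p
  obtain ⟨Bq, hBq0, hqb⟩ := vec_bound q
  obtain ⟨Bm1, hBm10, hm1b⟩ := vec_bound m1
  obtain ⟨Bm2, hBm20, hm2b⟩ := vec_bound m2
  obtain ⟨Bn1, hBn10, hn1b⟩ := vec_bound n1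
  obtain ⟨Bn2, hBn20, hn2b⟩ := vec_bound n2
  -- row sums of A and absolute sum of b
  obtain ⟨SA, hSA0, hrowA⟩ : ∃ SA, 0 ≤ SA ∧ ∀ i, ∑ j, |A i j| ≤ SA := by
    refine ⟨∑ i, ∑ j, |A i j|, Finset.sum_nonneg fun i _ =>
      Finset.sum_nonneg fun j _ => abs_nonneg _, fun i => ?_⟩
    exact Finset.single_le_sum (f := fun i => ∑ j, |A i j|)
      (fun i _ => Finset.sum_nonneg fun j _ => abs_nonneg _) (Finset.mem_univ i)
  obtain ⟨Sb, hSb0, hSb⟩ : ∃ Sb, 0 ≤ Sb ∧ ∑ i, |b i| ≤ Sb :=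
    ⟨∑ i, |b i|, Finset.sum_nonneg fun i _ => abs_nonneg _, le_rfl⟩
  -- continuity and bound for u
  have hUcont : ContinuousOn u (Set.Icc 0 T) := fun x hx => (hu x hx).continuousWithinAt
  obtain ⟨N, hN0, hN⟩ : ∃ N, 0 ≤ N ∧ ∀ x ∈ Set.Icc (0:ℝ) T, |u x| ≤ N := by
    obtain ⟨C0, hC0⟩ := IsCompact.exists_bound_of_continuousOn isCompact_Icc hUcont
    exact ⟨max C0 0, le_max_right _ _, fun x hx =>
      (Real.norm_eq_abs (u x) ▸ hC0 x hx).trans (le_max_left _ _)⟩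
  -- smoothness bookkeeping
  have hd1₁ : ContDiff ℝ 2 (deriv f₁) := by
    have := (contDiff_succ_iff_deriv (n := 2)).mp (by exact_mod_cast hf₁); exact this.2.2
  have hd2₁ : ContDiff ℝ 1 (deriv (deriv f₁)) := by
    have := (contDiff_succ_iff_deriv (n := 1)).mp (by exact_mod_cast hd1₁); exact this.2.2
  have hd1₂ : ContDiff ℝ 2 (deriv f₂) := by
    have := (contDiff_succ_iff_deriv (n := 2)).mp (by exact_mod_cast hf₂); exact this.2.2
  have hd2₂ : ContDiff ℝ 1 (deriv (deriv f₂)) := by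
    have := (contDiff_succ_iff_deriv (n := 1)).mp (by exact_mod_cast hd1₂); exact this.2.2
  have hdf₁ : Differentiable ℝ f₁ := hf₁.differentiable (by norm_num)
  have hdf₂ : Differentiable ℝ f₂ := hf₂.differentiable (by norm_num)
  have hdQ₁ : Differentiable ℝ (deriv f₁) := hd1₁.differentiable (by norm_num)
  have hdQ₂ : Differentiable ℝ (deriv f₂) := hd1₂.differentiable (by norm_num)
  have hcQ₁ : Continuous (deriv f₁) := hd1₁.continuous
  have hcQ₂ : Continuous (deriv f₂) := hd1₂.continuous
  have hcR₁ : Continuous (deriv (deriv f₁)) := hd2₁.continuous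
  have hcR₂ : Continuous (deriv (deriv f₂)) := hd2₂.continuous
  have hcS₁ : Continuous (deriv (deriv (deriv f₁))) := (contDiff_one_iff_deriv.mp hd2₁).2
  have hcS₂ : Continuous (deriv (deriv (deriv f₂))) := (contDiff_one_iff_deriv.mp hd2₂).2
  have hc1₁ : ContDiff ℝ 1 f₁ := hf₁.of_le (by norm_num)
  have hc1₂ : ContDiff ℝ 1 f₂ := hf₂.of_le (by norm_num)
  have hcd1₁ : ContDiff ℝ 1 (deriv f₁) := hd1₁.of_le (by norm_num)
  have hcd1₂ : ContDiff ℝ 1 (deriv f₂) := hd1₂.of_le (by norm_num)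
  -- small bound constant M0 on [-N, N]
  obtain ⟨M0, hM01, hM0all⟩ : ∃ M0, 1 ≤ M0 ∧ ∀ x : ℝ, |x| ≤ N →
      |f₁ x| ≤ M0 ∧ |f₂ x| ≤ M0 ∧ |deriv f₁ x| ≤ M0 ∧ |deriv f₂ x| ≤ M0 := by
    have hg : ContinuousOn (fun x => |f₁ x| + |f₂ x| + |deriv f₁ x| + |deriv f₂ x|)
        (Set.Icc (-N) N) :=
      (((hf₁.continuous.abs.add hf₂.continuous.abs).add hcQ₁.abs).add hcQ₂.abs).continuousOn
    obtain ⟨C0, hC0⟩ := IsCompact.exists_bound_of_continuousOn isCompact_Icc hg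
    refine ⟨max C0 1, le_max_right _ _, fun x hx => ?_⟩
    have hxm : x ∈ Set.Icc (-N) N := abs_le.mp hx
    have h1 := hC0 x hxm
    rw [Real.norm_eq_abs, abs_of_nonneg (by positivity)] at h1
    have h2 : C0 ≤ max C0 1 := le_max_left _ _
    refine ⟨by nlinarith [abs_nonneg (f₂ x), abs_nonneg (deriv f₁ x), abs_nonneg (deriv f₂ x)],
      by nlinarith [abs_nonneg (f₁ x), abs_nonneg (deriv f₁ x), abs_nonneg (deriv f₂ x)],
      by nlinarith [abs_nonneg (f₁ x), abs_nonneg (f₂ x), abs_nonneg (deriv f₂ x)],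
      by nlinarith [abs_nonneg (f₁ x), abs_nonneg (f₂ x), abs_nonneg (deriv f₁ x)]⟩
  have hM00 : (0:ℝ) ≤ M0 := by linarith
  -- aggregated constants
  set RB : ℝ := M0 * M0 * Bp + (M0 * M0 * (M0 * M0) * Bm1 + M0 * M0 * (M0 * M0) * Bm2)
      + M0 * M0 * Bq + (M0 * M0 * (M0 * M0) * Bn1 + M0 * M0 * (M0 * M0) * Bn2) + 1 with hRB
  clear_value RB
  have hq1 : (0:ℝ) ≤ M0 * M0 * Bp := mul_nonneg (mul_nonneg hM00 hM00) hBp0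
  have hq2 : (0:ℝ) ≤ M0 * M0 * (M0 * M0) * Bm1 :=
    mul_nonneg (mul_nonneg (mul_nonneg hM00 hM00) (mul_nonneg hM00 hM00)) hBm10
  have hq3 : (0:ℝ) ≤ M0 * M0 * (M0 * M0) * Bm2 :=
    mul_nonneg (mul_nonneg (mul_nonneg hM00 hM00) (mul_nonneg hM00 hM00)) hBm20
  have hq4 : (0:ℝ) ≤ M0 * M0 * Bq := mul_nonneg (mul_nonneg hM00 hM00) hBq0
  have hq5 : (0:ℝ) ≤ M0 * M0 * (M0 * M0) * Bn1 :=
    mul_nonneg (mul_nonneg (mul_nonneg hM00 hM00) (mul_nonneg hM00 hM00)) hBn10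
  have hq6 : (0:ℝ) ≤ M0 * M0 * (M0 * M0) * Bn2 :=
    mul_nonneg (mul_nonneg (mul_nonneg hM00 hM00) (mul_nonneg hM00 hM00)) hBn20
  have hRB1 : (1:ℝ) ≤ RB := by rw [hRB]; linarith
  have hRB0 : (0:ℝ) ≤ RB := by linarith
  set N' : ℝ := N + RB with hN'
  clear_value N'
  -- the auxiliary functions GG and H
  set GG : ℝ → ℝ := fun y => (deriv f₁ y * f₂ y + f₁ y * deriv f₂ y) * (f₁ y * f₂ y)
    with hGG
  set H : ℝ → ℝ := fun y =>
      ((deriv (deriv f₁) y * f₂ y + 2 * (deriv f₁ y * deriv f₂ y)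
          + f₁ y * deriv (deriv f₂) y) * (f₁ y * f₂ y)
        + (deriv f₁ y * f₂ y + f₁ y * deriv f₂ y) ^ 2) * (f₁ y * f₂ y) with hH
  clear_value GG H
  have hHc1 : ContDiff ℝ 1 H := by
    rw [hH]
    exact ((((hd2₁.mul hc1₂).add ((contDiff_const).mul (hcd1₁.mul hcd1₂))).add
        (hc1₁.mul hd2₂)).mul (hc1₁.mul hc1₂)).add
        (((hcd1₁.mul hc1₂).add (hc1₁.mul hcd1₂)).pow 2) |>.mul (hc1₁.mul hc1₂)
  have hdH : Differentiable ℝ H := hHc1.differentiable (by norm_num)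
  have hdHc : Continuous (deriv H) := (contDiff_one_iff_deriv.mp hHc1).2
  -- big bound constant M on [-N', N']
  obtain ⟨M, hM1, hMall⟩ : ∃ M, 1 ≤ M ∧ ∀ x : ℝ, |x| ≤ N' →
      |f₁ x| ≤ M ∧ |f₂ x| ≤ M ∧ |deriv f₁ x| ≤ M ∧ |deriv f₂ x| ≤ M ∧
      |deriv (deriv f₁) x| ≤ M ∧ |deriv (deriv f₂) x| ≤ M ∧
      |deriv (deriv (deriv f₁)) x| ≤ M ∧ |deriv (deriv (deriv f₂)) x| ≤ M ∧
      |deriv H x| ≤ M := by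
    have hg : ContinuousOn (fun x => |f₁ x| + |f₂ x| + |deriv f₁ x| + |deriv f₂ x|
        + |deriv (deriv f₁) x| + |deriv (deriv f₂) x| + |deriv (deriv (deriv f₁)) x|
        + |deriv (deriv (deriv f₂)) x| + |deriv H x|) (Set.Icc (-N') N') :=
      ((((((((hf₁.continuous.abs.add hf₂.continuous.abs).add hcQ₁.abs).add
        hcQ₂.abs).add hcR₁.abs).add hcR₂.abs).add hcS₁.abs).add hcS₂.abs).add
        hdHc.abs).continuousOn
    obtain ⟨C0, hC0⟩ := IsCompact.exists_bound_of_continuousOn isCompact_Icc hg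
    refine ⟨max C0 1, le_max_right _ _, fun x hx => ?_⟩
    have hxm : x ∈ Set.Icc (-N') N' := abs_le.mp hx
    have h1 := hC0 x hxm
    rw [Real.norm_eq_abs, abs_of_nonneg (by positivity)] at h1
    have h2 : C0 ≤ max C0 1 := le_max_left _ _
    have a1 := abs_nonneg (f₁ x); have a2 := abs_nonneg (f₂ x)
    have a3 := abs_nonneg (deriv f₁ x); have a4 := abs_nonneg (deriv f₂ x)
    have a5 := abs_nonneg (deriv (deriv f₁) x); have a6 := abs_nonneg (deriv (deriv f₂) x)
    have a7 := abs_nonneg (deriv (deriv (deriv f₁)) x)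
    have a8 := abs_nonneg (deriv (deriv (deriv f₂)) x)
    have a9 := abs_nonneg (deriv H x)
    exact ⟨by linarith, by linarith, by linarith, by linarith, by linarith,
      by linarith, by linarith, by linarith, by linarith⟩
  have hM0le : (0:ℝ) ≤ M := by linarith
  set CM : ℝ := M + RB with hCM
  clear_value CM
  have hCM1 : (1:ℝ) ≤ CM := by rw [hCM]; linarith
  have hCM0 : (0:ℝ) ≤ CM := by linarith
  -- the final constant
  set C : ℝ := M ^ 3 + Sb * (300 * CM ^ 8) + SA * (5 * CM ^ 4) + SA * (300 * CM ^ 8) + 1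
    with hCdef
  clear_value C
  have hCM8 : (0:ℝ) ≤ 300 * CM ^ 8 := by positivity
  have hCM4 : (0:ℝ) ≤ 5 * CM ^ 4 := by positivity
  have hCt1 : (0:ℝ) ≤ M ^ 3 := by positivity
  have hCt2 : (0:ℝ) ≤ Sb * (300 * CM ^ 8) := mul_nonneg hSb0 hCM8
  have hCt3 : (0:ℝ) ≤ SA * (5 * CM ^ 4) := mul_nonneg hSA0 hCM4
  have hCt4 : (0:ℝ) ≤ SA * (300 * CM ^ 8) := mul_nonneg hSA0 hCM8
  have hCpos : 0 < C := by rw [hCdef]; linarith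
  refine ⟨C, hCpos, ?_⟩
  intro τ hτ0 hτ1 t ht htT
  intro v₀ v1 v2 v vhat
  -- let-equations
  have hv0 : v₀ = u t := rfl
  have hv1e : v1 = (f₁ v₀ * f₂ v₀) • c := rfl
  have hv2e : v2 = (deriv f₁ v₀ * f₂ v₀) • (A *ᵥ (D1 *ᵥ (J *ᵥ v1)))
      + (f₁ v₀ * deriv f₂ v₀) • (A *ᵥ (D2 *ᵥ v1)) := rfl
  have hve : v = fun i => v₀ + τ * v1 i + τ ^ 2 * v2 i := rfl
  have hvhate : vhat = fun i => v₀ + τ * (J *ᵥ v1) i + τ ^ 2 * (J *ᵥ v2) i := rfl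
  clear_value v₀ v1 v2 v vhat
  -- scalar bounds at v₀
  have hwN : |v₀| ≤ N := by rw [hv0]; exact hN t ht
  have hwN' : |v₀| ≤ N' := by rw [hN']; linarith only [hwN, hRB0]
  obtain ⟨hf1M0, hf2M0, hq1M0, hq2M0⟩ := hM0all v₀ hwN
  obtain ⟨hf1M, hf2M, hq1M, hq2M, hr1M, hr2M, hs1M, hs2M, hdHM⟩ := hMall v₀ hwN'
  have hMleCM : M ≤ CM := by rw [hCM]; linarith only [hRB0]
  have hP1CM : |f₁ v₀| ≤ CM := hf1M.trans hMleCM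
  have hP2CM : |f₂ v₀| ≤ CM := hf2M.trans hMleCM
  have hQ1CM : |deriv f₁ v₀| ≤ CM := hq1M.trans hMleCM
  have hQ2CM : |deriv f₂ v₀| ≤ CM := hq2M.trans hMleCM
  have hR1CM : |deriv (deriv f₁) v₀ / 2| ≤ CM := by
    rw [abs_div, abs_two]; linarith only [hr1M, hMleCM, hM1, abs_nonneg (deriv (deriv f₁) v₀)]
  have hR2CM : |deriv (deriv f₂) v₀ / 2| ≤ CM := by
    rw [abs_div, abs_two]; linarith only [hr2M, hMleCM, hM1, abs_nonneg (deriv (deriv f₂) v₀)]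
  -- component bounds
  have hALM0 : ∀ i, |f₁ v₀ * f₂ v₀ * p i| ≤ M0 * M0 * Bp :=
    fun i => rmul (rmul hf1M0 hf2M0) (hpb i)
  have hGAM0 : ∀ i, |f₁ v₀ * f₂ v₀ * q i| ≤ M0 * M0 * Bq :=
    fun i => rmul (rmul hf1M0 hf2M0) (hqb i)
  have hBEM0 : ∀ i, |(deriv f₁ v₀ * f₂ v₀ * (f₁ v₀ * f₂ v₀) * m1 i + f₁ v₀ * deriv f₂ v₀ * (f₁ v₀ * f₂ v₀) * m2 i)|
      ≤ M0 * M0 * (M0 * M0) * Bm1 + M0 * M0 * (M0 * M0) * Bm2 :=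
    fun i => radd (rmul (rmul (rmul hq1M0 hf2M0) (rmul hf1M0 hf2M0)) (hm1b i))
      (rmul (rmul (rmul hf1M0 hq2M0) (rmul hf1M0 hf2M0)) (hm2b i))
  have hDEM0 : ∀ i, |(deriv f₁ v₀ * f₂ v₀ * (f₁ v₀ * f₂ v₀) * n1 i + f₁ v₀ * deriv f₂ v₀ * (f₁ v₀ * f₂ v₀) * n2 i)|
      ≤ M0 * M0 * (M0 * M0) * Bn1 + M0 * M0 * (M0 * M0) * Bn2 :=
    fun i => radd (rmul (rmul (rmul hq1M0 hf2M0) (rmul hf1M0 hf2M0)) (hn1b i))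
      (rmul (rmul (rmul hf1M0 hq2M0) (rmul hf1M0 hf2M0)) (hn2b i))
  have hALCM : ∀ i, |f₁ v₀ * f₂ v₀ * p i| ≤ CM := fun i => (hALM0 i).trans
    (by rw [hCM]; linarith only [hRB, hq2, hq3, hq4, hq5, hq6, hM0le])
  have hGACM : ∀ i, |f₁ v₀ * f₂ v₀ * q i| ≤ CM := fun i => (hGAM0 i).trans
    (by rw [hCM]; linarith only [hRB, hq1, hq2, hq3, hq5, hq6, hM0le])
  have hBECM : ∀ i, |(deriv f₁ v₀ * f₂ v₀ * (f₁ v₀ * f₂ v₀) * m1 i + f₁ v₀ * deriv f₂ v₀ * (f₁ v₀ * f₂ v₀) * m2 i)| ≤ CM := fun i => (hBEM0 i).trans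
    (by rw [hCM]; linarith only [hRB, hq1, hq4, hq5, hq6, hM0le])
  have hDECM : ∀ i, |(deriv f₁ v₀ * f₂ v₀ * (f₁ v₀ * f₂ v₀) * n1 i + f₁ v₀ * deriv f₂ v₀ * (f₁ v₀ * f₂ v₀) * n2 i)| ≤ CM := fun i => (hDEM0 i).trans
    (by rw [hCM]; linarith only [hRB, hq1, hq2, hq3, hq4, hM0le])
  -- vector identities
  have hJv1 : J *ᵥ v1 = (f₁ v₀ * f₂ v₀) • (J *ᵥ c) := by rw [hv1e, Matrix.mulVec_smul]
  have hD1Jv1 : D1 *ᵥ (J *ᵥ v1) = (f₁ v₀ * f₂ v₀) • p := by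
    rw [hJv1, Matrix.mulVec_smul, ← hp]
  have hD2v1 : D2 *ᵥ v1 = (f₁ v₀ * f₂ v₀) • q := by
    rw [hv1e, Matrix.mulVec_smul, ← hq]
  have hv2vec : v2 = (deriv f₁ v₀ * f₂ v₀ * (f₁ v₀ * f₂ v₀)) • r1
      + (f₁ v₀ * deriv f₂ v₀ * (f₁ v₀ * f₂ v₀)) • r2 := by
    rw [hv2e, hD1Jv1, hD2v1, Matrix.mulVec_smul, Matrix.mulVec_smul, ← hr1, ← hr2,
      smul_smul, smul_smul]
  have hD1Jv2 : D1 *ᵥ (J *ᵥ v2) = (deriv f₁ v₀ * f₂ v₀ * (f₁ v₀ * f₂ v₀)) • m1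
      + (f₁ v₀ * deriv f₂ v₀ * (f₁ v₀ * f₂ v₀)) • m2 := by
    rw [hv2vec, Matrix.mulVec_add, Matrix.mulVec_add, Matrix.mulVec_smul, Matrix.mulVec_smul,
      Matrix.mulVec_smul, Matrix.mulVec_smul, ← hm1, ← hm2]
  have hD2v2 : D2 *ᵥ v2 = (deriv f₁ v₀ * f₂ v₀ * (f₁ v₀ * f₂ v₀)) • n1
      + (f₁ v₀ * deriv f₂ v₀ * (f₁ v₀ * f₂ v₀)) • n2 := by
    rw [hv2vec, Matrix.mulVec_add, Matrix.mulVec_smul, Matrix.mulVec_smul, ← hn1, ← hn2]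
  have hconst : ∀ (D : Matrix (Fin s) (Fin s) ℝ), ((D *ᵥ fun _ => 1) = fun _ => 1) →
      (D *ᵥ fun _ : Fin s => v₀) = fun _ => v₀ := by
    intro D hD
    have h1 : (fun _ : Fin s => v₀) = v₀ • (fun _ : Fin s => (1:ℝ)) := by funext k; simp
    rw [h1, Matrix.mulVec_smul, hD]
  have hvhat2 : vhat = (fun _ => v₀) + τ • (J *ᵥ v1) + τ ^ 2 • (J *ᵥ v2) := by
    rw [hvhate]; funext k; simp [Pi.add_apply, Pi.smul_apply, smul_eq_mul]
  have hv' : v = (fun _ => v₀) + τ • v1 + τ ^ 2 • v2 := by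
    rw [hve]; funext k; simp [Pi.add_apply, Pi.smul_apply, smul_eq_mul]
  have hargs1 : ∀ i, (D1 *ᵥ vhat) i = v₀ + (τ * (f₁ v₀ * f₂ v₀ * p i) + τ ^ 2 * (deriv f₁ v₀ * f₂ v₀ * (f₁ v₀ * f₂ v₀) * m1 i + f₁ v₀ * deriv f₂ v₀ * (f₁ v₀ * f₂ v₀) * m2 i)) := by
    intro i
    rw [hvhat2, Matrix.mulVec_add, Matrix.mulVec_add, Matrix.mulVec_smul, Matrix.mulVec_smul,
      hconst D1 hD1row, hD1Jv1, hD1Jv2]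
    simp only [Pi.add_apply, Pi.smul_apply, smul_eq_mul]
    ring
  have hargs2 : ∀ i, (D2 *ᵥ v) i = v₀ + (τ * (f₁ v₀ * f₂ v₀ * q i) + τ ^ 2 * (deriv f₁ v₀ * f₂ v₀ * (f₁ v₀ * f₂ v₀) * n1 i + f₁ v₀ * deriv f₂ v₀ * (f₁ v₀ * f₂ v₀) * n2 i)) := by
    intro i
    rw [hv', Matrix.mulVec_add, Matrix.mulVec_add, Matrix.mulVec_smul, Matrix.mulVec_smul,
      hconst D2 hD2row, hD2v1, hD2v2]
    simp only [Pi.add_apply, Pi.smul_apply, smul_eq_mul]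
    ring
  -- taylor remainder hypotheses and pointwise key bound
  have hτa : |τ| = τ := abs_of_pos hτ0
  have hτle : |τ| ≤ 1 := by rw [hτa]; exact hτ1
  have hτ2le : |τ ^ 2| ≤ 1 := by
    rw [abs_pow, hτa]; exact pow_le_one₀ hτ0.le hτ1
  have hMS₁ : ∀ x : ℝ, |x| ≤ N' → |deriv (deriv (deriv f₁)) x| ≤ M :=
    fun x hx => (hMall x hx).2.2.2.2.2.2.1
  have hMS₂ : ∀ x : ℝ, |x| ≤ N' → |deriv (deriv (deriv f₂)) x| ≤ M :=
    fun x hx => (hMall x hx).2.2.2.2.2.2.2.1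
  have hT1 := taylor2 hf₁ N' M hM0le hMS₁
  have hT2 := taylor2 hf₂ N' M hM0le hMS₂
  have hkey : ∀ i, |f₁ ((D1 *ᵥ vhat) i) * f₂ ((D2 *ᵥ v) i) - (f₁ v₀ * f₂ v₀ + τ * (deriv f₁ v₀ * f₂ v₀ * (f₁ v₀ * f₂ v₀ * p i) + f₁ v₀ * deriv f₂ v₀ * (f₁ v₀ * f₂ v₀ * q i)) + τ ^ 2 * (deriv f₁ v₀ * f₂ v₀ * (deriv f₁ v₀ * f₂ v₀ * (f₁ v₀ * f₂ v₀) * m1 i + f₁ v₀ * deriv f₂ v₀ * (f₁ v₀ * f₂ v₀) * m2 i) + f₁ v₀ * deriv f₂ v₀ * (deriv f₁ v₀ * f₂ v₀ * (f₁ v₀ * f₂ v₀) * n1 i + f₁ v₀ * deriv f₂ v₀ * (f₁ v₀ * f₂ v₀) * n2 i) + deriv (deriv f₁) v₀ / 2 * f₂ v₀ * ((f₁ v₀ * f₂ v₀ * p i) * (f₁ v₀ * f₂ v₀ * p i)) + f₁ v₀ * (deriv (deriv f₂) v₀ / 2) * ((f₁ v₀ * f₂ v₀ * q i) * (f₁ v₀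 * f₂ v₀ * q i)) + deriv f₁ v₀ * deriv f₂ v₀ * ((f₁ v₀ * f₂ v₀ * p i) * (f₁ v₀ * f₂ v₀ * q i))))| ≤ 300 * CM ^ 8 * τ ^ 3 := by
    intro i
    have hhb1 : |τ * (f₁ v₀ * f₂ v₀ * p i) + τ ^ 2 * (deriv f₁ v₀ * f₂ v₀ * (f₁ v₀ * f₂ v₀) * m1 i + f₁ v₀ * deriv f₂ v₀ * (f₁ v₀ * f₂ v₀) * m2 i)|
        ≤ 1 * (M0 * M0 * Bp)
          + 1 * (M0 * M0 * (M0 * M0) * Bm1 + M0 * M0 * (M0 * M0) * Bm2) :=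
      radd (rmul hτle (hALM0 i)) (rmul hτ2le (hBEM0 i))
    have hhb2 : |τ * (f₁ v₀ * f₂ v₀ * q i) + τ ^ 2 * (deriv f₁ v₀ * f₂ v₀ * (f₁ v₀ * f₂ v₀) * n1 i + f₁ v₀ * deriv f₂ v₀ * (f₁ v₀ * f₂ v₀) * n2 i)|
        ≤ 1 * (M0 * M0 * Bq)
          + 1 * (M0 * M0 * (M0 * M0) * Bn1 + M0 * M0 * (M0 * M0) * Bn2) :=
      radd (rmul hτle (hGAM0 i)) (rmul hτ2le (hDEM0 i))
    have hwh1 : |v₀| + |τ * (f₁ v₀ * f₂ v₀ * p i) + τ ^ 2 * (deriv f₁ v₀ * f₂ v₀ * (f₁ v₀ * f₂ v₀) * m1 i + f₁ v₀ * deriv f₂ v₀ * (f₁ v₀ * f₂ v₀) * m2 i)| ≤ N' := by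
      rw [hN']; linarith only [hwN, hhb1, hRB, hq4, hq5, hq6]
    have hwh2 : |v₀| + |τ * (f₁ v₀ * f₂ v₀ * q i) + τ ^ 2 * (deriv f₁ v₀ * f₂ v₀ * (f₁ v₀ * f₂ v₀) * n1 i + f₁ v₀ * deriv f₂ v₀ * (f₁ v₀ * f₂ v₀) * n2 i)| ≤ N' := by
      rw [hN']; linarith only [hwN, hhb2, hRB, hq1, hq2, hq3]
    have h1 := hT1 v₀ (τ * (f₁ v₀ * f₂ v₀ * p i) + τ ^ 2 * (deriv f₁ v₀ * f₂ v₀ * (f₁ v₀ * f₂ v₀) * m1 i + f₁ v₀ * deriv f₂ v₀ * (f₁ v₀ * f₂ v₀) * m2 i)) hwh1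
    have h2 := hT2 v₀ (τ * (f₁ v₀ * f₂ v₀ * q i) + τ ^ 2 * (deriv f₁ v₀ * f₂ v₀ * (f₁ v₀ * f₂ v₀) * n1 i + f₁ v₀ * deriv f₂ v₀ * (f₁ v₀ * f₂ v₀) * n2 i)) hwh2
    rw [← hargs1 i] at h1
    rw [← hargs2 i] at h2
    have e1 : f₁ v₀ + deriv f₁ v₀ * (τ * (f₁ v₀ * f₂ v₀ * p i) + τ ^ 2 * (deriv f₁ v₀ * f₂ v₀ * (f₁ v₀ * f₂ v₀) * m1 i + f₁ v₀ * deriv f₂ v₀ * (f₁ v₀ * f₂ v₀) * m2 i))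
        + deriv (deriv f₁) v₀ * ((τ * (f₁ v₀ * f₂ v₀ * p i) + τ ^ 2 * (deriv f₁ v₀ * f₂ v₀ * (f₁ v₀ * f₂ v₀) * m1 i + f₁ v₀ * deriv f₂ v₀ * (f₁ v₀ * f₂ v₀) * m2 i)) ^ 2 / 2)
        = f₁ v₀ + deriv f₁ v₀ * (τ * (f₁ v₀ * f₂ v₀ * p i) + τ ^ 2 * (deriv f₁ v₀ * f₂ v₀ * (f₁ v₀ * f₂ v₀) * m1 i + f₁ v₀ * deriv f₂ v₀ * (f₁ v₀ * f₂ v₀) * m2 i))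
        + deriv (deriv f₁) v₀ / 2 * (τ * (f₁ v₀ * f₂ v₀ * p i) + τ ^ 2 * (deriv f₁ v₀ * f₂ v₀ * (f₁ v₀ * f₂ v₀) * m1 i + f₁ v₀ * deriv f₂ v₀ * (f₁ v₀ * f₂ v₀) * m2 i)) ^ 2 := by ring
    have e2 : f₂ v₀ + deriv f₂ v₀ * (τ * (f₁ v₀ * f₂ v₀ * q i) + τ ^ 2 * (deriv f₁ v₀ * f₂ v₀ * (f₁ v₀ * f₂ v₀) * n1 i + f₁ v₀ * deriv f₂ v₀ * (f₁ v₀ * f₂ v₀) * n2 i))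
        + deriv (deriv f₂) v₀ * ((τ * (f₁ v₀ * f₂ v₀ * q i) + τ ^ 2 * (deriv f₁ v₀ * f₂ v₀ * (f₁ v₀ * f₂ v₀) * n1 i + f₁ v₀ * deriv f₂ v₀ * (f₁ v₀ * f₂ v₀) * n2 i)) ^ 2 / 2)
        = f₂ v₀ + deriv f₂ v₀ * (τ * (f₁ v₀ * f₂ v₀ * q i) + τ ^ 2 * (deriv f₁ v₀ * f₂ v₀ * (f₁ v₀ * f₂ v₀) * n1 i + f₁ v₀ * deriv f₂ v₀ * (f₁ v₀ * f₂ v₀) * n2 i))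
        + (deriv (deriv f₂) v₀ / 2) * (τ * (f₁ v₀ * f₂ v₀ * q i) + τ ^ 2 * (deriv f₁ v₀ * f₂ v₀ * (f₁ v₀ * f₂ v₀) * n1 i + f₁ v₀ * deriv f₂ v₀ * (f₁ v₀ * f₂ v₀) * n2 i)) ^ 2 := by ring
    rw [e1] at h1
    rw [e2] at h2
    have h1' := h1.trans (mul_le_mul_of_nonneg_right hMleCM
      (pow_nonneg (abs_nonneg _) 3))
    have h2' := h2.trans (mul_le_mul_of_nonneg_right hMleCM
      (pow_nonneg (abs_nonneg _) 3))
    exact key_alg hCM1 hP1CM hQ1CM hR1CM hP2CM hQ2CM hR2CM (hALCM i) (hBECM i)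
      (hGACM i) (hDECM i) hτ0 hτ1 h1' h2'
  -- u-Taylor expansion
  have hu4 : |u (t + τ) - (v₀ + f₁ v₀ * f₂ v₀ * τ + GG v₀ * (τ ^ 2 / 2)
      + H v₀ * (τ ^ 3 / 6))| ≤ M ^ 3 * τ ^ 4 := by
    have hsmem : ∀ x ∈ Set.Icc (0:ℝ) τ, t + x ∈ Set.Icc (0:ℝ) T := by
      intro x hx
      exact ⟨by linarith only [ht.1, hx.1], by linarith only [hx.2, htT]⟩
    have hub : ∀ x ∈ Set.Icc (0:ℝ) τ, |u (t + x)| ≤ N := fun x hx => hN _ (hsmem x hx)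
    have hubN' : ∀ x ∈ Set.Icc (0:ℝ) τ, |u (t + x)| ≤ N' := fun x hx => by
      have h1 := hub x hx; rw [hN']; linarith only [h1, hRB0]
    have d0 : ∀ x ∈ Set.Icc (0:ℝ) τ, HasDerivWithinAt (fun y => u (t + y))
        (f₁ (u (t + x)) * f₂ (u (t + x))) (Set.Icc 0 τ) x := by
      intro x hx
      have h1 : HasDerivWithinAt (fun y : ℝ => t + y) 1 (Set.Icc 0 τ) x :=
        ((hasDerivAt_id x).const_add t).hasDerivWithinAt
      have h2 := (hu (t + x) (hsmem x hx)).comp x h1 (fun y hy => hsmem y hy)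
      simpa [Function.comp_def, mul_one] using h2
    have cP1 : ∀ x ∈ Set.Icc (0:ℝ) τ, HasDerivWithinAt (fun y => f₁ (u (t + y)))
        (deriv f₁ (u (t + x)) * (f₁ (u (t + x)) * f₂ (u (t + x)))) (Set.Icc 0 τ) x := by
      intro x hx
      simpa [Function.comp_def] using
        ((hdf₁ (u (t + x))).hasDerivAt.comp_hasDerivWithinAt x (d0 x hx))
    have cP2 : ∀ x ∈ Set.Icc (0:ℝ) τ, HasDerivWithinAt (fun y => f₂ (u (t + y)))
        (deriv f₂ (u (t + x)) * (f₁ (u (t + x)) * f₂ (u (t + x)))) (Set.Icc 0 τ) x := by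
      intro x hx
      simpa [Function.comp_def] using
        ((hdf₂ (u (t + x))).hasDerivAt.comp_hasDerivWithinAt x (d0 x hx))
    have cQ1 : ∀ x ∈ Set.Icc (0:ℝ) τ, HasDerivWithinAt (fun y => deriv f₁ (u (t + y)))
        (deriv (deriv f₁) (u (t + x)) * (f₁ (u (t + x)) * f₂ (u (t + x)))) (Set.Icc 0 τ) x := by
      intro x hx
      simpa [Function.comp_def] using
        ((hdQ₁ (u (t + x))).hasDerivAt.comp_hasDerivWithinAt x (d0 x hx))
    have cQ2 : ∀ x ∈ Set.Icc (0:ℝ) τ, HasDerivWithinAt (fun y => deriv f₂ (u (t + y)))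
        (deriv (deriv f₂) (u (t + x)) * (f₁ (u (t + x)) * f₂ (u (t + x)))) (Set.Icc 0 τ) x := by
      intro x hx
      simpa [Function.comp_def] using
        ((hdQ₂ (u (t + x))).hasDerivAt.comp_hasDerivWithinAt x (d0 x hx))
    have dF : ∀ x ∈ Set.Icc (0:ℝ) τ, HasDerivWithinAt
        (fun y => f₁ (u (t + y)) * f₂ (u (t + y))) (GG (u (t + x))) (Set.Icc 0 τ) x := by
      intro x hx
      have h1 := (cP1 x hx).mul (cP2 x hx)
      refine h1.congr_deriv ?_
      simp only [hGG]; ring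
    have dG : ∀ x ∈ Set.Icc (0:ℝ) τ, HasDerivWithinAt
        (fun y => GG (u (t + y))) (H (u (t + x))) (Set.Icc 0 τ) x := by
      intro x hx
      have h1 := ((cQ1 x hx).mul (cP2 x hx)).add ((cP1 x hx).mul (cQ2 x hx))
      have h2 := (cP1 x hx).mul (cP2 x hx)
      have h3 := h1.mul h2
      simp only [hGG, hH]
      refine h3.congr_deriv ?_
      simp only [Pi.mul_apply, Pi.add_apply]
      ring
    have dH2 : ∀ x ∈ Set.Icc (0:ℝ) τ, HasDerivWithinAt (fun y => H (u (t + y)))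
        (deriv H (u (t + x)) * (f₁ (u (t + x)) * f₂ (u (t + x)))) (Set.Icc 0 τ) x := by
      intro x hx
      simpa [Function.comp_def] using
        ((hdH (u (t + x))).hasDerivAt.comp_hasDerivWithinAt x (d0 x hx))
    have hM3nn : (0:ℝ) ≤ M * (M * M) := mul_nonneg hM0le (mul_nonneg hM0le hM0le)
    have lev3 : ∀ x ∈ Set.Icc (0:ℝ) τ, |H (u (t + x)) - H (u t)|
        ≤ M * (M * M) * τ := by
      intro x hx
      have hxsub : Set.uIcc (0:ℝ) x ⊆ Set.Icc 0 τ := by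
        rw [Set.uIcc_of_le hx.1]; exact Set.Icc_subset_Icc le_rfl hx.2
      have key := mvt_zero (g := fun y => H (u (t + y)))
        (g' := fun y => deriv H (u (t + y)) * (f₁ (u (t + y)) * f₂ (u (t + y))))
        (h := x)
        (fun y hy => (dH2 y (hxsub hy)).mono hxsub)
        (fun y hy => rmul ((hMall _ (hubN' y (hxsub hy))).2.2.2.2.2.2.2.2)
          (rmul ((hMall _ (hubN' y (hxsub hy))).1)
            ((hMall _ (hubN' y (hxsub hy))).2.1)))
      simp only [add_zero] at key
      refine key.trans ?_
      have hxle : |x| ≤ τ := by rw [abs_of_nonneg hx.1]; exact hx.2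
      exact mul_le_mul_of_nonneg_left hxle hM3nn
    have lev2 : ∀ x ∈ Set.Icc (0:ℝ) τ,
        |GG (u (t + x)) - (GG (u t) + H (u t) * x)|
        ≤ M * (M * M) * τ * τ := by
      intro x hx
      have hxsub : Set.uIcc (0:ℝ) x ⊆ Set.Icc 0 τ := by
        rw [Set.uIcc_of_le hx.1]; exact Set.Icc_subset_Icc le_rfl hx.2
      have key := mvt_zero
        (g := fun y => GG (u (t + y)) - (GG (u t) + H (u t) * y))
        (g' := fun y => H (u (t + y)) - H (u t))
        (h := x)
        (fun y hy => by
          have hlin : HasDerivWithinAt (fun y : ℝ => GG (u t) + H (u t) * y)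
              (H (u t)) (Set.uIcc 0 x) y := by
            simpa using (((hasDerivAt_id y).const_mul (H (u t))).const_add
              (GG (u t))).hasDerivWithinAt
          exact ((dG y (hxsub hy)).mono hxsub).sub hlin)
        (fun y hy => lev3 y (hxsub hy))
      simp only [mul_zero, add_zero, sub_self, sub_zero] at key
      refine key.trans ?_
      have hxle : |x| ≤ τ := by rw [abs_of_nonneg hx.1]; exact hx.2
      exact mul_le_mul_of_nonneg_left hxle (mul_nonneg hM3nn hτ0.le)
    have lev1 : ∀ x ∈ Set.Icc (0:ℝ) τ,
        |f₁ (u (t + x)) * f₂ (u (t + x)) - (f₁ (u t) * f₂ (u t)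
          + GG (u t) * x + H (u t) * (x ^ 2 / 2))|
        ≤ M * (M * M) * τ * τ * τ := by
      intro x hx
      have hxsub : Set.uIcc (0:ℝ) x ⊆ Set.Icc 0 τ := by
        rw [Set.uIcc_of_le hx.1]; exact Set.Icc_subset_Icc le_rfl hx.2
      have key := mvt_zero
        (g := fun y => f₁ (u (t + y)) * f₂ (u (t + y)) - (f₁ (u t) * f₂ (u t)
          + GG (u t) * y + H (u t) * (y ^ 2 / 2)))
        (g' := fun y => GG (u (t + y)) - (GG (u t) + H (u t) * y))
        (h := x)
        (fun y hy => by
          have hq2 : HasDerivAt (fun y : ℝ => y ^ 2 / 2) y y := by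
            simpa using (hasDerivAt_pow 2 y).div_const 2
          have hlin : HasDerivWithinAt (fun y : ℝ => f₁ (u t) * f₂ (u t)
              + GG (u t) * y + H (u t) * (y ^ 2 / 2))
              (GG (u t) + H (u t) * y) (Set.uIcc 0 x) y := by
            have h5 := (((hasDerivAt_id y).const_mul (GG (u t))).const_add
              (f₁ (u t) * f₂ (u t))).add (hq2.const_mul (H (u t)))
            simpa [Pi.add_def] using h5.hasDerivWithinAt
          exact ((dF y (hxsub hy)).mono hxsub).sub hlin)
        (fun y hy => lev2 y (hxsub hy))
      norm_num at key
      refine key.trans ?_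
      have hxle : |x| ≤ τ := by rw [abs_of_nonneg hx.1]; exact hx.2
      exact mul_le_mul_of_nonneg_left hxle (mul_nonneg (mul_nonneg hM3nn hτ0.le) hτ0.le)
    have key := mvt_zero
      (g := fun y => u (t + y) - (u t + f₁ (u t) * f₂ (u t) * y
        + GG (u t) * (y ^ 2 / 2) + H (u t) * (y ^ 3 / 6)))
      (g' := fun y => f₁ (u (t + y)) * f₂ (u (t + y)) - (f₁ (u t) * f₂ (u t)
        + GG (u t) * y + H (u t) * (y ^ 2 / 2)))
      (h := τ)
      (fun y hy => by
        have hymem : y ∈ Set.Icc (0:ℝ) τ := by rwa [Set.uIcc_of_le hτ0.le] at hy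
        have hq2 : HasDerivAt (fun y : ℝ => y ^ 2 / 2) y y := by
          simpa using (hasDerivAt_pow 2 y).div_const 2
        have hq3 : HasDerivAt (fun y : ℝ => y ^ 3 / 6) (y ^ 2 / 2) y := by
          have h6 := (hasDerivAt_pow 3 y).div_const 6
          refine h6.congr_deriv ?_
          push_cast; ring
        have hlin : HasDerivWithinAt (fun y : ℝ => u t
            + f₁ (u t) * f₂ (u t) * y
            + GG (u t) * (y ^ 2 / 2) + H (u t) * (y ^ 3 / 6))
            (f₁ (u t) * f₂ (u t) + GG (u t) * y
              + H (u t) * (y ^ 2 / 2)) (Set.uIcc 0 τ) y := by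
          have h5 := ((((hasDerivAt_id y).const_mul (f₁ (u t) * f₂ (u t))).const_add
            (u t)).add (hq2.const_mul (GG (u t)))).add
            (hq3.const_mul (H (u t)))
          simpa [Pi.add_def] using h5.hasDerivWithinAt
        exact ((d0 y hymem).mono (le_of_eq (Set.uIcc_of_le hτ0.le))).sub hlin)
      (fun y hy => lev1 y (by rwa [Set.uIcc_of_le hτ0.le] at hy))
    norm_num at key
    rw [hv0]
    refine key.trans (le_of_eq ?_)
    rw [hτa]; ring
  -- row-sum identities
  have hAone : ∀ i, (∑ j, A i j * 1) = c i := by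
    intro i; rw [hc]; simp [Matrix.mulVec, dotProduct]
  have hApp : ∀ i, (∑ j, A i j * p j) = r1 i := by
    intro i; rw [hr1]; simp [Matrix.mulVec, dotProduct]
  have hAqq : ∀ i, (∑ j, A i j * q j) = r2 i := by
    intro i; rw [hr2]; simp [Matrix.mulVec, dotProduct]
  -- weighted sum of the bracket
  have hsum2 : ∑ i, b i * (f₁ v₀ * f₂ v₀ + τ * (deriv f₁ v₀ * f₂ v₀ * (f₁ v₀ * f₂ v₀ * p i) + f₁ v₀ * deriv f₂ v₀ * (f₁ v₀ * f₂ v₀ * q i)) + τ ^ 2 * (deriv f₁ v₀ * f₂ v₀ * (deriv f₁ v₀ * f₂ v₀ * (f₁ v₀ * f₂ v₀) * m1 i + f₁ v₀ * deriv f₂ v₀ * (f₁ v₀ * f₂ v₀) * m2 i) + f₁ v₀ * deriv f₂ v₀ * (deriv f₁ v₀ * f₂ v₀ * (f₁ v₀ * f₂ v₀) * n1 i + f₁ v₀ * deriv f₂ v₀ * (f₁ v₀ * f₂ v₀) * n2 i) + deriv (deriv f₁) v₀ / 2 * f₂ v₀ * ((f₁ v₀ * f₂ v₀ * p i) * (f₁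 v₀ * f₂ v₀ * p i)) + f₁ v₀ * (deriv (deriv f₂) v₀ / 2) * ((f₁ v₀ * f₂ v₀ * q i) * (f₁ v₀ * f₂ v₀ * q i)) + deriv f₁ v₀ * deriv f₂ v₀ * ((f₁ v₀ * f₂ v₀ * p i) * (f₁ v₀ * f₂ v₀ * q i))))
      = f₁ v₀ * f₂ v₀ + τ * (GG v₀ / 2) + τ ^ 2 * (H v₀ / 6) := by
    have h1 : ∀ i : Fin s, b i * (f₁ v₀ * f₂ v₀ + τ * (deriv f₁ v₀ * f₂ v₀ * (f₁ v₀ * f₂ v₀ * p i) + f₁ v₀ * deriv f₂ v₀ * (f₁ v₀ * f₂ v₀ * q i)) + τ ^ 2 * (deriv f₁ v₀ * f₂ v₀ * (deriv f₁ v₀ * f₂ v₀ * (f₁ v₀ * f₂ v₀) * m1 i + f₁ v₀ * deriv f₂ v₀ * (f₁ v₀ * f₂ v₀) * m2 i) + f₁ v₀ * deriv f₂ v₀ * (deriv f₁ v₀ * f₂ v₀ * (f₁ v₀ * f₂ v₀) * n1 i + f₁ v₀ * deriv f₂ v₀ * (f₁ v₀ * f₂ v₀) * n2 i) + deriv (deriv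 f₁) v₀ / 2 * f₂ v₀ * ((f₁ v₀ * f₂ v₀ * p i) * (f₁ v₀ * f₂ v₀ * p i)) + f₁ v₀ * (deriv (deriv f₂) v₀ / 2) * ((f₁ v₀ * f₂ v₀ * q i) * (f₁ v₀ * f₂ v₀ * q i)) + deriv f₁ v₀ * deriv f₂ v₀ * ((f₁ v₀ * f₂ v₀ * p i) * (f₁ v₀ * f₂ v₀ * q i))))
        = (f₁ v₀ * f₂ v₀) * b i
        + (τ * (deriv f₁ v₀ * f₂ v₀ * (f₁ v₀ * f₂ v₀))) * (b i * p i)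
        + (τ * (f₁ v₀ * deriv f₂ v₀ * (f₁ v₀ * f₂ v₀))) * (b i * q i)
        + (τ ^ 2 * (deriv f₁ v₀ * f₂ v₀ * (deriv f₁ v₀ * f₂ v₀ * (f₁ v₀ * f₂ v₀)))) * (b i * m1 i)
        + (τ ^ 2 * (deriv f₁ v₀ * f₂ v₀ * (f₁ v₀ * deriv f₂ v₀ * (f₁ v₀ * f₂ v₀)))) * (b i * m2 i)
        + (τ ^ 2 * (f₁ v₀ * deriv f₂ v₀ * (deriv f₁ v₀ * f₂ v₀ * (f₁ v₀ * f₂ v₀)))) * (b i * n1 i)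
        + (τ ^ 2 * (f₁ v₀ * deriv f₂ v₀ * (f₁ v₀ * deriv f₂ v₀ * (f₁ v₀ * f₂ v₀)))) * (b i * n2 i)
        + (τ ^ 2 * (deriv (deriv f₁) v₀ / 2 * f₂ v₀ * (f₁ v₀ * f₂ v₀ * (f₁ v₀ * f₂ v₀)))) * (b i * (p i * p i))
        + (τ ^ 2 * (f₁ v₀ * (deriv (deriv f₂) v₀ / 2) * (f₁ v₀ * f₂ v₀ * (f₁ v₀ * f₂ v₀)))) * (b i * (q i * q i))
        + (τ ^ 2 * (deriv f₁ v₀ * deriv f₂ v₀ * (f₁ v₀ * f₂ v₀ * (f₁ v₀ * f₂ v₀)))) * (b i * (p i * q i)) :=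
      fun i => by ring
    rw [Finset.sum_congr rfl fun i _ => h1 i]
    simp only [Finset.sum_add_distrib, ← Finset.mul_sum]
    rw [ord1, osc2a, osc2b, osc3a, osc3b, osc3c, osc3d, osc3e, osc3g, osc3f]
    simp only [hGG, hH]
    ring
  have hdiff1 : (∑ i, b i * (f₁ ((D1 *ᵥ vhat) i) * f₂ ((D2 *ᵥ v) i))) - (∑ i, b i * (f₁ v₀ * f₂ v₀ + τ * (deriv f₁ v₀ * f₂ v₀ * (f₁ v₀ * f₂ v₀ * p i) + f₁ v₀ * deriv f₂ v₀ * (f₁ v₀ * f₂ v₀ * q i)) + τ ^ 2 * (deriv f₁ v₀ * f₂ v₀ * (deriv f₁ v₀ * f₂ v₀ * (f₁ v₀ * f₂ v₀) * m1 i + f₁ v₀ * deriv f₂ v₀ * (f₁ v₀ * f₂ v₀) * m2 i) + f₁ v₀ * deriv f₂ v₀ * (deriv f₁ v₀ * f₂ v₀ * (f₁ v₀ * f₂ v₀) * n1 i + f₁ v₀ * deriv f₂ v₀ * (f₁ v₀ * f₂ v₀) * n2 i) + deriv (deriv f₁) v₀ / 2 * f₂ v₀ * ((f₁ v₀ * f₂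 v₀ * p i) * (f₁ v₀ * f₂ v₀ * p i)) + f₁ v₀ * (deriv (deriv f₂) v₀ / 2) * ((f₁ v₀ * f₂ v₀ * q i) * (f₁ v₀ * f₂ v₀ * q i)) + deriv f₁ v₀ * deriv f₂ v₀ * ((f₁ v₀ * f₂ v₀ * p i) * (f₁ v₀ * f₂ v₀ * q i)))))
      = ∑ i, b i * ((f₁ ((D1 *ᵥ vhat) i) * f₂ ((D2 *ᵥ v) i)) - (f₁ v₀ * f₂ v₀ + τ * (deriv f₁ v₀ * f₂ v₀ * (f₁ v₀ * f₂ v₀ * p i) + f₁ v₀ * deriv f₂ v₀ * (f₁ v₀ * f₂ v₀ * q i)) + τ ^ 2 * (deriv f₁ v₀ * f₂ v₀ * (deriv f₁ v₀ * f₂ v₀ * (f₁ v₀ * f₂ v₀) * m1 i + f₁ v₀ * deriv f₂ v₀ * (f₁ v₀ * f₂ v₀) * m2 i) + f₁ v₀ * deriv f₂ v₀ * (deriv f₁ v₀ * f₂ v₀ * (f₁ v₀ * f₂ v₀) * n1 i + f₁ v₀ * deriv f₂ v₀ * (f₁ v₀ * f₂ v₀) * n2 i) + deriv (deriv f₁)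 v₀ / 2 * f₂ v₀ * ((f₁ v₀ * f₂ v₀ * p i) * (f₁ v₀ * f₂ v₀ * p i)) + f₁ v₀ * (deriv (deriv f₂) v₀ / 2) * ((f₁ v₀ * f₂ v₀ * q i) * (f₁ v₀ * f₂ v₀ * q i)) + deriv f₁ v₀ * deriv f₂ v₀ * ((f₁ v₀ * f₂ v₀ * p i) * (f₁ v₀ * f₂ v₀ * q i))))) := by
    rw [← Finset.sum_sub_distrib]
    exact Finset.sum_congr rfl fun i _ => by ring
  have habs1 : |∑ i, b i * ((f₁ ((D1 *ᵥ vhat) i) * f₂ ((D2 *ᵥ v) i)) - (f₁ v₀ * f₂ v₀ + τ * (deriv f₁ v₀ * f₂ v₀ * (f₁ v₀ * f₂ v₀ * p i) + f₁ v₀ * deriv f₂ v₀ * (f₁ v₀ * f₂ v₀ * q i)) + τ ^ 2 * (deriv f₁ v₀ * f₂ v₀ * (deriv f₁ v₀ * f₂ v₀ * (f₁ v₀ * f₂ v₀) * m1 i + f₁ v₀ * deriv f₂ v₀ * (f₁ v₀ * f₂ v₀) * m2 i) + f₁ v₀ * deriv f₂ v₀ * (deriv f₁ v₀ * f₂ v₀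 * (f₁ v₀ * f₂ v₀) * n1 i + f₁ v₀ * deriv f₂ v₀ * (f₁ v₀ * f₂ v₀) * n2 i) + deriv (deriv f₁) v₀ / 2 * f₂ v₀ * ((f₁ v₀ * f₂ v₀ * p i) * (f₁ v₀ * f₂ v₀ * p i)) + f₁ v₀ * (deriv (deriv f₂) v₀ / 2) * ((f₁ v₀ * f₂ v₀ * q i) * (f₁ v₀ * f₂ v₀ * q i)) + deriv f₁ v₀ * deriv f₂ v₀ * ((f₁ v₀ * f₂ v₀ * p i) * (f₁ v₀ * f₂ v₀ * q i)))))| ≤ Sb * (300 * CM ^ 8 * τ ^ 3) := by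
    have hnn : (0:ℝ) ≤ 300 * CM ^ 8 * τ ^ 3 :=
      mul_nonneg (by positivity) (pow_nonneg hτ0.le 3)
    calc |∑ i, b i * ((f₁ ((D1 *ᵥ vhat) i) * f₂ ((D2 *ᵥ v) i)) - (f₁ v₀ * f₂ v₀ + τ * (deriv f₁ v₀ * f₂ v₀ * (f₁ v₀ * f₂ v₀ * p i) + f₁ v₀ * deriv f₂ v₀ * (f₁ v₀ * f₂ v₀ * q i)) + τ ^ 2 * (deriv f₁ v₀ * f₂ v₀ * (deriv f₁ v₀ * f₂ v₀ * (f₁ v₀ * f₂ v₀) * m1 i + f₁ v₀ * deriv f₂ v₀ * (f₁ v₀ * f₂ v₀) * m2 i) + f₁ v₀ * deriv f₂ v₀ * (deriv f₁ v₀ * f₂ v₀ * (f₁ v₀ * f₂ v₀) * n1 i + f₁ v₀ * deriv f₂ v₀ * (f₁ v₀ * f₂ v₀) * n2 i) + deriv (deriv f₁) v₀ / 2 * f₂ v₀ * ((f₁ v₀ * f₂ v₀ * p i) * (f₁ v₀ * f₂ v₀ * p i)) + f₁ v₀ * (deriv (deriv f₂) v₀ / 2) * ((f₁ v₀ * f₂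 v₀ * q i) * (f₁ v₀ * f₂ v₀ * q i)) + deriv f₁ v₀ * deriv f₂ v₀ * ((f₁ v₀ * f₂ v₀ * p i) * (f₁ v₀ * f₂ v₀ * q i)))))|
        ≤ ∑ i, |b i * ((f₁ ((D1 *ᵥ vhat) i) * f₂ ((D2 *ᵥ v) i)) - (f₁ v₀ * f₂ v₀ + τ * (deriv f₁ v₀ * f₂ v₀ * (f₁ v₀ * f₂ v₀ * p i) + f₁ v₀ * deriv f₂ v₀ * (f₁ v₀ * f₂ v₀ * q i)) + τ ^ 2 * (deriv f₁ v₀ * f₂ v₀ * (deriv f₁ v₀ * f₂ v₀ * (f₁ v₀ * f₂ v₀) * m1 i + f₁ v₀ * deriv f₂ v₀ * (f₁ v₀ * f₂ v₀) * m2 i) + f₁ v₀ * deriv f₂ v₀ * (deriv f₁ v₀ * f₂ v₀ * (f₁ v₀ * f₂ v₀) * n1 i + f₁ v₀ * deriv f₂ v₀ * (f₁ v₀ * f₂ v₀) * n2 i) + deriv (deriv f₁) v₀ / 2 * f₂ v₀ * ((f₁ v₀ * f₂ v₀ * p i) * (f₁ v₀ * f₂ v₀ * p i)) + f₁ v₀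 * (deriv (deriv f₂) v₀ / 2) * ((f₁ v₀ * f₂ v₀ * q i) * (f₁ v₀ * f₂ v₀ * q i)) + deriv f₁ v₀ * deriv f₂ v₀ * ((f₁ v₀ * f₂ v₀ * p i) * (f₁ v₀ * f₂ v₀ * q i)))))| := Finset.abs_sum_le_sum_abs _ _
      _ ≤ ∑ i, |b i| * (300 * CM ^ 8 * τ ^ 3) := Finset.sum_le_sum fun i _ => by
          rw [abs_mul]; exact mul_le_mul_of_nonneg_left (hkey i) (abs_nonneg _)
      _ = (∑ i, |b i|) * (300 * CM ^ 8 * τ ^ 3) := by rw [Finset.sum_mul]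
      _ ≤ Sb * (300 * CM ^ 8 * τ ^ 3) := mul_le_mul_of_nonneg_right hSb hnn
  -- the stage bracket tail
  set QD : Fin s → ℝ := fun k =>
    deriv f₁ v₀ * f₂ v₀ * (deriv f₁ v₀ * f₂ v₀ * (f₁ v₀ * f₂ v₀) * m1 k + f₁ v₀ * deriv f₂ v₀ * (f₁ v₀ * f₂ v₀) * m2 k) + f₁ v₀ * deriv f₂ v₀ * (deriv f₁ v₀ * f₂ v₀ * (f₁ v₀ * f₂ v₀) * n1 k + f₁ v₀ * deriv f₂ v₀ * (f₁ v₀ * f₂ v₀) * n2 k)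
      + deriv (deriv f₁) v₀ / 2 * f₂ v₀ * ((f₁ v₀ * f₂ v₀ * p k) * (f₁ v₀ * f₂ v₀ * p k))
      + f₁ v₀ * (deriv (deriv f₂) v₀ / 2) * ((f₁ v₀ * f₂ v₀ * q k) * (f₁ v₀ * f₂ v₀ * q k))
      + deriv f₁ v₀ * deriv f₂ v₀ * ((f₁ v₀ * f₂ v₀ * p k) * (f₁ v₀ * f₂ v₀ * q k)) with hQD
  clear_value QD
  have hQDb : ∀ k, |QD k| ≤ 5 * CM ^ 4 := by
    intro k
    have hk : QD k = deriv f₁ v₀ * f₂ v₀ * (deriv f₁ v₀ * f₂ v₀ * (f₁ v₀ * f₂ v₀) * m1 k + f₁ v₀ * deriv f₂ v₀ * (f₁ v₀ * f₂ v₀) * m2 k) + f₁ v₀ * deriv f₂ v₀ * (deriv f₁ v₀ * f₂ v₀ * (f₁ v₀ * f₂ v₀) * n1 k + f₁ v₀ * deriv f₂ v₀ * (f₁ v₀ * f₂ v₀) * n2 k)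
      + deriv (deriv f₁) v₀ / 2 * f₂ v₀ * ((f₁ v₀ * f₂ v₀ * p k) * (f₁ v₀ * f₂ v₀ * p k))
      + f₁ v₀ * (deriv (deriv f₂) v₀ / 2) * ((f₁ v₀ * f₂ v₀ * q k) * (f₁ v₀ * f₂ v₀ * q k))
      + deriv f₁ v₀ * deriv f₂ v₀ * ((f₁ v₀ * f₂ v₀ * p k) * (f₁ v₀ * f₂ v₀ * q k)) := by rw [hQD]
    rw [hk]
    refine le_trans ?_ (num4 hCM1)
    exact radd (radd (radd (radd (rmul (rmul hQ1CM hP2CM) (hBECM k))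
      (rmul (rmul hP1CM hQ2CM) (hDECM k)))
      (rmul (rmul hR1CM hP2CM) (rmul (hALCM k) (hALCM k))))
      (rmul (rmul hP1CM hR2CM) (rmul (hGACM k) (hGACM k))))
      (rmul (rmul hQ1CM hQ2CM) (rmul (hALCM k) (hGACM k)))
  have hst2 : ∀ i, ∑ j, A i j * (f₁ v₀ * f₂ v₀ + τ * (deriv f₁ v₀ * f₂ v₀ * (f₁ v₀ * f₂ v₀ * p j) + f₁ v₀ * deriv f₂ v₀ * (f₁ v₀ * f₂ v₀ * q j)) + τ ^ 2 * (deriv f₁ v₀ * f₂ v₀ * (deriv f₁ v₀ * f₂ v₀ * (f₁ v₀ * f₂ v₀) * m1 j + f₁ v₀ * deriv f₂ v₀ * (f₁ v₀ * f₂ v₀) * m2 j) + f₁ v₀ * deriv f₂ v₀ * (deriv f₁ v₀ * f₂ v₀ * (f₁ v₀ * f₂ v₀) * n1 j + f₁ v₀ * deriv f₂ v₀ * (f₁ v₀ * f₂ v₀) * n2 j) + deriv (deriv f₁) v₀ / 2 * f₂ v₀ * ((f₁ v₀ * f₂ v₀ * p j) * (f₁ v₀ * f₂ v₀ * p j)) +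 f₁ v₀ * (deriv (deriv f₂) v₀ / 2) * ((f₁ v₀ * f₂ v₀ * q j) * (f₁ v₀ * f₂ v₀ * q j)) + deriv f₁ v₀ * deriv f₂ v₀ * ((f₁ v₀ * f₂ v₀ * p j) * (f₁ v₀ * f₂ v₀ * q j))))
      = (f₁ v₀ * f₂ v₀) * (∑ j, A i j * 1)
        + (τ * (deriv f₁ v₀ * f₂ v₀ * (f₁ v₀ * f₂ v₀))) * (∑ j, A i j * p j)
        + (τ * (f₁ v₀ * deriv f₂ v₀ * (f₁ v₀ * f₂ v₀))) * (∑ j, A i j * q j)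
        + τ ^ 2 * (∑ j, A i j * QD j) := by
    intro i
    have h1 : ∀ j : Fin s, A i j * (f₁ v₀ * f₂ v₀ + τ * (deriv f₁ v₀ * f₂ v₀ * (f₁ v₀ * f₂ v₀ * p j) + f₁ v₀ * deriv f₂ v₀ * (f₁ v₀ * f₂ v₀ * q j)) + τ ^ 2 * (deriv f₁ v₀ * f₂ v₀ * (deriv f₁ v₀ * f₂ v₀ * (f₁ v₀ * f₂ v₀) * m1 j + f₁ v₀ * deriv f₂ v₀ * (f₁ v₀ * f₂ v₀) * m2 j) + f₁ v₀ * deriv f₂ v₀ * (deriv f₁ v₀ * f₂ v₀ * (f₁ v₀ * f₂ v₀) * n1 j + f₁ v₀ * deriv f₂ v₀ * (f₁ v₀ * f₂ v₀) * n2 j) + deriv (deriv f₁) v₀ / 2 * f₂ v₀ * ((f₁ v₀ * f₂ v₀ * p j) * (f₁ v₀ * f₂ v₀ * p j)) + f₁ v₀ * (deriv (deriv f₂) v₀ / 2) * ((f₁ v₀ * f₂ v₀ * q j) * (f₁ v₀ * f₂ v₀ * q j)) + deriv f₁ v₀ * deriv f₂ v₀ * ((f₁ v₀ * f₂ v₀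 * p j) * (f₁ v₀ * f₂ v₀ * q j))))
        = (f₁ v₀ * f₂ v₀) * (A i j * 1)
        + (τ * (deriv f₁ v₀ * f₂ v₀ * (f₁ v₀ * f₂ v₀))) * (A i j * p j)
        + (τ * (f₁ v₀ * deriv f₂ v₀ * (f₁ v₀ * f₂ v₀))) * (A i j * q j)
        + τ ^ 2 * (A i j * QD j) := fun j => by simp only [hQD]; ring
    rw [Finset.sum_congr rfl fun j _ => h1 j]
    simp only [Finset.sum_add_distrib, ← Finset.mul_sum]
  constructor
  · -- one-step residual
    have hle1 : M ^ 3 + Sb * (300 * CM ^ 8) ≤ C := by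
      rw [hCdef]; linarith only [hCt3, hCt4]
    have heq1 : u (t + τ) - v₀ - τ * (∑ i, b i * (f₁ ((D1 *ᵥ vhat) i) * f₂ ((D2 *ᵥ v) i)))
        = (u (t + τ) - (v₀ + f₁ v₀ * f₂ v₀ * τ + GG v₀ * (τ ^ 2 / 2) + H v₀ * (τ ^ 3 / 6)))
          - τ * ((∑ i, b i * (f₁ ((D1 *ᵥ vhat) i) * f₂ ((D2 *ᵥ v) i))) - (∑ i, b i * (f₁ v₀ * f₂ v₀ + τ * (deriv f₁ v₀ * f₂ v₀ * (f₁ v₀ * f₂ v₀ * p i) + f₁ v₀ * deriv f₂ v₀ * (f₁ v₀ * f₂ v₀ * q i)) + τ ^ 2 * (deriv f₁ v₀ * f₂ v₀ * (deriv f₁ v₀ * f₂ v₀ * (f₁ v₀ * f₂ v₀) * m1 i + f₁ v₀ * deriv f₂ v₀ * (f₁ v₀ * f₂ v₀) * m2 i) + f₁ v₀ * deriv f₂ v₀ * (deriv f₁ v₀ * f₂ v₀ * (f₁ v₀ * f₂ v₀) * n1 i + f₁ v₀ * deriv f₂ v₀ * (f₁ v₀ * f₂ v₀) * n2 i) + deriv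 (deriv f₁) v₀ / 2 * f₂ v₀ * ((f₁ v₀ * f₂ v₀ * p i) * (f₁ v₀ * f₂ v₀ * p i)) + f₁ v₀ * (deriv (deriv f₂) v₀ / 2) * ((f₁ v₀ * f₂ v₀ * q i) * (f₁ v₀ * f₂ v₀ * q i)) + deriv f₁ v₀ * deriv f₂ v₀ * ((f₁ v₀ * f₂ v₀ * p i) * (f₁ v₀ * f₂ v₀ * q i)))))) := by
      rw [hsum2]; ring
    calc |u (t + τ) - v₀ - τ * ∑ i, b i * (f₁ ((D1 *ᵥ vhat) i) * f₂ ((D2 *ᵥ v) i))|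
        = |(u (t + τ) - (v₀ + f₁ v₀ * f₂ v₀ * τ + GG v₀ * (τ ^ 2 / 2) + H v₀ * (τ ^ 3 / 6)))
          - τ * (∑ i, b i * ((f₁ ((D1 *ᵥ vhat) i) * f₂ ((D2 *ᵥ v) i)) - (f₁ v₀ * f₂ v₀ + τ * (deriv f₁ v₀ * f₂ v₀ * (f₁ v₀ * f₂ v₀ * p i) + f₁ v₀ * deriv f₂ v₀ * (f₁ v₀ * f₂ v₀ * q i)) + τ ^ 2 * (deriv f₁ v₀ * f₂ v₀ * (deriv f₁ v₀ * f₂ v₀ * (f₁ v₀ * f₂ v₀) * m1 i + f₁ v₀ * deriv f₂ v₀ * (f₁ v₀ * f₂ v₀) * m2 i) + f₁ v₀ * deriv f₂ v₀ * (deriv f₁ v₀ * f₂ v₀ * (f₁ v₀ * f₂ v₀) * n1 i + f₁ v₀ * deriv f₂ v₀ * (f₁ v₀ * f₂ v₀) * n2 i) + deriv (deriv f₁) v₀ / 2 * f₂ v₀ * ((f₁ v₀ * f₂ v₀ * p i) * (f₁ v₀ * f₂ v₀ * p i)) + f₁ v₀ * (deriv (deriv f₂) v₀ / 2) * ((f₁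 v₀ * f₂ v₀ * q i) * (f₁ v₀ * f₂ v₀ * q i)) + deriv f₁ v₀ * deriv f₂ v₀ * ((f₁ v₀ * f₂ v₀ * p i) * (f₁ v₀ * f₂ v₀ * q i))))))| := by rw [heq1, hdiff1]
      _ ≤ |u (t + τ) - (v₀ + f₁ v₀ * f₂ v₀ * τ + GG v₀ * (τ ^ 2 / 2) + H v₀ * (τ ^ 3 / 6))|
          + |τ * (∑ i, b i * ((f₁ ((D1 *ᵥ vhat) i) * f₂ ((D2 *ᵥ v) i)) - (f₁ v₀ * f₂ v₀ + τ * (deriv f₁ v₀ * f₂ v₀ * (f₁ v₀ * f₂ v₀ * p i) + f₁ v₀ * deriv f₂ v₀ * (f₁ v₀ * f₂ v₀ * q i)) + τ ^ 2 * (deriv f₁ v₀ * f₂ v₀ * (deriv f₁ v₀ * f₂ v₀ * (f₁ v₀ * f₂ v₀) * m1 i + f₁ v₀ * deriv f₂ v₀ * (f₁ v₀ * f₂ v₀) * m2 i) + f₁ v₀ * deriv f₂ v₀ * (deriv f₁ v₀ * f₂ v₀ * (f₁ v₀ * f₂ v₀) * n1 i + f₁ v₀ * deriv f₂ v₀ *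 (f₁ v₀ * f₂ v₀) * n2 i) + deriv (deriv f₁) v₀ / 2 * f₂ v₀ * ((f₁ v₀ * f₂ v₀ * p i) * (f₁ v₀ * f₂ v₀ * p i)) + f₁ v₀ * (deriv (deriv f₂) v₀ / 2) * ((f₁ v₀ * f₂ v₀ * q i) * (f₁ v₀ * f₂ v₀ * q i)) + deriv f₁ v₀ * deriv f₂ v₀ * ((f₁ v₀ * f₂ v₀ * p i) * (f₁ v₀ * f₂ v₀ * q i))))))| := by
          rw [sub_eq_add_neg]
          exact (abs_add_le _ _).trans (le_of_eq (by rw [abs_neg]))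
      _ ≤ M ^ 3 * τ ^ 4 + τ * (Sb * (300 * CM ^ 8 * τ ^ 3)) := by
          refine add_le_add hu4 ?_
          rw [abs_mul, hτa]
          exact mul_le_mul_of_nonneg_left habs1 hτ0.le
      _ = (M ^ 3 + Sb * (300 * CM ^ 8)) * τ ^ 4 := by ring
      _ ≤ C * τ ^ 4 := mul_le_mul_of_nonneg_right hle1 (pow_nonneg hτ0.le 4)
  · -- stage residuals
    intro i
    have hle2 : SA * (5 * CM ^ 4) + SA * (300 * CM ^ 8) ≤ C := by
      rw [hCdef]; linarith only [hCt1, hCt2]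
    have hvi : v i = v₀ + τ * v1 i + τ ^ 2 * v2 i := by simp only [hve]
    have hv1i : v1 i = f₁ v₀ * f₂ v₀ * c i := by rw [hv1e]; simp [smul_eq_mul]
    have hv2i : v2 i = deriv f₁ v₀ * f₂ v₀ * (f₁ v₀ * f₂ v₀) * r1 i
        + f₁ v₀ * deriv f₂ v₀ * (f₁ v₀ * f₂ v₀) * r2 i := by
      rw [hv2vec]; simp [smul_eq_mul]
    have hres : v i - v₀ - τ * (∑ j, A i j * (f₁ ((D1 *ᵥ vhat) j) * f₂ ((D2 *ᵥ v) j)))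
        = -(τ ^ 3 * (∑ j, A i j * QD j))
          - τ * ((∑ j, A i j * (f₁ ((D1 *ᵥ vhat) j) * f₂ ((D2 *ᵥ v) j))) - ∑ j, A i j * (f₁ v₀ * f₂ v₀ + τ * (deriv f₁ v₀ * f₂ v₀ * (f₁ v₀ * f₂ v₀ * p j) + f₁ v₀ * deriv f₂ v₀ * (f₁ v₀ * f₂ v₀ * q j)) + τ ^ 2 * (deriv f₁ v₀ * f₂ v₀ * (deriv f₁ v₀ * f₂ v₀ * (f₁ v₀ * f₂ v₀) * m1 j + f₁ v₀ * deriv f₂ v₀ * (f₁ v₀ * f₂ v₀) * m2 j) + f₁ v₀ * deriv f₂ v₀ * (deriv f₁ v₀ * f₂ v₀ * (f₁ v₀ * f₂ v₀) * n1 j + f₁ v₀ * deriv f₂ v₀ * (f₁ v₀ * f₂ v₀) * n2 j) + deriv (deriv f₁) v₀ / 2 * f₂ v₀ * ((f₁ v₀ * f₂ v₀ * p j) * (f₁ v₀ * f₂ v₀ * p j)) + f₁ v₀ * (deriv (deriv f₂) v₀ / 2) * ((f₁ v₀ * f₂ v₀ * q j) * (f₁ v₀ * f₂ v₀ * q j))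 + deriv f₁ v₀ * deriv f₂ v₀ * ((f₁ v₀ * f₂ v₀ * p j) * (f₁ v₀ * f₂ v₀ * q j))))) := by
      rw [hvi, hv1i, hv2i, hst2 i, hAone i, hApp i, hAqq i]; ring
    have hdiffA : (∑ j, A i j * (f₁ ((D1 *ᵥ vhat) j) * f₂ ((D2 *ᵥ v) j))) - (∑ j, A i j * (f₁ v₀ * f₂ v₀ + τ * (deriv f₁ v₀ * f₂ v₀ * (f₁ v₀ * f₂ v₀ * p j) + f₁ v₀ * deriv f₂ v₀ * (f₁ v₀ * f₂ v₀ * q j)) + τ ^ 2 * (deriv f₁ v₀ * f₂ v₀ * (deriv f₁ v₀ * f₂ v₀ * (f₁ v₀ * f₂ v₀) * m1 j + f₁ v₀ * deriv f₂ v₀ * (f₁ v₀ * f₂ v₀) * m2 j) + f₁ v₀ * deriv f₂ v₀ * (deriv f₁ v₀ * f₂ v₀ * (f₁ v₀ * f₂ v₀) * n1 j + f₁ v₀ * deriv f₂ v₀ * (f₁ v₀ * f₂ v₀) * n2 j) + deriv (deriv f₁) v₀ / 2 * f₂ v₀ * ((f₁ v₀ * f₂ v₀ * p j) * (f₁ v₀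 * f₂ v₀ * p j)) + f₁ v₀ * (deriv (deriv f₂) v₀ / 2) * ((f₁ v₀ * f₂ v₀ * q j) * (f₁ v₀ * f₂ v₀ * q j)) + deriv f₁ v₀ * deriv f₂ v₀ * ((f₁ v₀ * f₂ v₀ * p j) * (f₁ v₀ * f₂ v₀ * q j)))))
        = ∑ j, A i j * ((f₁ ((D1 *ᵥ vhat) j) * f₂ ((D2 *ᵥ v) j)) - (f₁ v₀ * f₂ v₀ + τ * (deriv f₁ v₀ * f₂ v₀ * (f₁ v₀ * f₂ v₀ * p j) + f₁ v₀ * deriv f₂ v₀ * (f₁ v₀ * f₂ v₀ * q j)) + τ ^ 2 * (deriv f₁ v₀ * f₂ v₀ * (deriv f₁ v₀ * f₂ v₀ * (f₁ v₀ * f₂ v₀) * m1 j + f₁ v₀ * deriv f₂ v₀ * (f₁ v₀ * f₂ v₀) * m2 j) + f₁ v₀ * deriv f₂ v₀ * (deriv f₁ v₀ * f₂ v₀ * (f₁ v₀ * f₂ v₀) * n1 j + f₁ v₀ * deriv f₂ v₀ * (f₁ v₀ * f₂ v₀) * n2 j) + deriv (deriv f₁) v₀ / 2 * f₂ v₀ *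 ((f₁ v₀ * f₂ v₀ * p j) * (f₁ v₀ * f₂ v₀ * p j)) + f₁ v₀ * (deriv (deriv f₂) v₀ / 2) * ((f₁ v₀ * f₂ v₀ * q j) * (f₁ v₀ * f₂ v₀ * q j)) + deriv f₁ v₀ * deriv f₂ v₀ * ((f₁ v₀ * f₂ v₀ * p j) * (f₁ v₀ * f₂ v₀ * q j))))) := by
      rw [← Finset.sum_sub_distrib]
      exact Finset.sum_congr rfl fun j _ => by ring
    have hnn5 : (0:ℝ) ≤ 5 * CM ^ 4 := by positivity
    have hAQDb : |∑ j, A i j * QD j| ≤ SA * (5 * CM ^ 4) := by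
      calc |∑ j, A i j * QD j| ≤ ∑ j, |A i j * QD j| := Finset.abs_sum_le_sum_abs _ _
        _ ≤ ∑ j, |A i j| * (5 * CM ^ 4) := Finset.sum_le_sum fun j _ => by
            rw [abs_mul]; exact mul_le_mul_of_nonneg_left (hQDb j) (abs_nonneg _)
        _ = (∑ j, |A i j|) * (5 * CM ^ 4) := by rw [Finset.sum_mul]
        _ ≤ SA * (5 * CM ^ 4) := mul_le_mul_of_nonneg_right (hrowA i) hnn5
    have hnn8 : (0:ℝ) ≤ 300 * CM ^ 8 * τ ^ 3 :=
      mul_nonneg (by positivity) (pow_nonneg hτ0.le 3)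
    have hAdel : |∑ j, A i j * ((f₁ ((D1 *ᵥ vhat) j) * f₂ ((D2 *ᵥ v) j)) - (f₁ v₀ * f₂ v₀ + τ * (deriv f₁ v₀ * f₂ v₀ * (f₁ v₀ * f₂ v₀ * p j) + f₁ v₀ * deriv f₂ v₀ * (f₁ v₀ * f₂ v₀ * q j)) + τ ^ 2 * (deriv f₁ v₀ * f₂ v₀ * (deriv f₁ v₀ * f₂ v₀ * (f₁ v₀ * f₂ v₀) * m1 j + f₁ v₀ * deriv f₂ v₀ * (f₁ v₀ * f₂ v₀) * m2 j) + f₁ v₀ * deriv f₂ v₀ * (deriv f₁ v₀ * f₂ v₀ * (f₁ v₀ * f₂ v₀) * n1 j + f₁ v₀ * deriv f₂ v₀ * (f₁ v₀ * f₂ v₀) * n2 j) + deriv (deriv f₁) v₀ / 2 * f₂ v₀ * ((f₁ v₀ * f₂ v₀ * p j) * (f₁ v₀ * f₂ v₀ * p j)) + f₁ v₀ * (deriv (deriv f₂) v₀ / 2) * ((f₁ v₀ * f₂ v₀ * q j) * (f₁ v₀ * f₂ v₀ * q j)) + deriv f₁ v₀ * deriv f₂ v₀ * ((f₁ v₀ *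 f₂ v₀ * p j) * (f₁ v₀ * f₂ v₀ * q j)))))| ≤ SA * (300 * CM ^ 8 * τ ^ 3) := by
      calc |∑ j, A i j * ((f₁ ((D1 *ᵥ vhat) j) * f₂ ((D2 *ᵥ v) j)) - (f₁ v₀ * f₂ v₀ + τ * (deriv f₁ v₀ * f₂ v₀ * (f₁ v₀ * f₂ v₀ * p j) + f₁ v₀ * deriv f₂ v₀ * (f₁ v₀ * f₂ v₀ * q j)) + τ ^ 2 * (deriv f₁ v₀ * f₂ v₀ * (deriv f₁ v₀ * f₂ v₀ * (f₁ v₀ * f₂ v₀) * m1 j + f₁ v₀ * deriv f₂ v₀ * (f₁ v₀ * f₂ v₀) * m2 j) + f₁ v₀ * deriv f₂ v₀ * (deriv f₁ v₀ * f₂ v₀ * (f₁ v₀ * f₂ v₀) * n1 j + f₁ v₀ * deriv f₂ v₀ * (f₁ v₀ * f₂ v₀) * n2 j) + deriv (deriv f₁) v₀ / 2 * f₂ v₀ * ((f₁ v₀ * f₂ v₀ * p j) * (f₁ v₀ * f₂ v₀ * p j)) + f₁ v₀ * (deriv (deriv f₂) v₀ / 2) * ((f₁ v₀ * f₂ v₀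 * q j) * (f₁ v₀ * f₂ v₀ * q j)) + deriv f₁ v₀ * deriv f₂ v₀ * ((f₁ v₀ * f₂ v₀ * p j) * (f₁ v₀ * f₂ v₀ * q j)))))|
          ≤ ∑ j, |A i j * ((f₁ ((D1 *ᵥ vhat) j) * f₂ ((D2 *ᵥ v) j)) - (f₁ v₀ * f₂ v₀ + τ * (deriv f₁ v₀ * f₂ v₀ * (f₁ v₀ * f₂ v₀ * p j) + f₁ v₀ * deriv f₂ v₀ * (f₁ v₀ * f₂ v₀ * q j)) + τ ^ 2 * (deriv f₁ v₀ * f₂ v₀ * (deriv f₁ v₀ * f₂ v₀ * (f₁ v₀ * f₂ v₀) * m1 j + f₁ v₀ * deriv f₂ v₀ * (f₁ v₀ * f₂ v₀) * m2 j) + f₁ v₀ * deriv f₂ v₀ * (deriv f₁ v₀ * f₂ v₀ * (f₁ v₀ * f₂ v₀) * n1 j + f₁ v₀ * deriv f₂ v₀ * (f₁ v₀ * f₂ v₀) * n2 j) + deriv (deriv f₁) v₀ / 2 * f₂ v₀ * ((f₁ v₀ * f₂ v₀ * p j) * (f₁ v₀ * f₂ v₀ * p j)) + f₁ v₀ * (deriv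 (deriv f₂) v₀ / 2) * ((f₁ v₀ * f₂ v₀ * q j) * (f₁ v₀ * f₂ v₀ * q j)) + deriv f₁ v₀ * deriv f₂ v₀ * ((f₁ v₀ * f₂ v₀ * p j) * (f₁ v₀ * f₂ v₀ * q j)))))| := Finset.abs_sum_le_sum_abs _ _
        _ ≤ ∑ j, |A i j| * (300 * CM ^ 8 * τ ^ 3) := Finset.sum_le_sum fun j _ => by
            rw [abs_mul]; exact mul_le_mul_of_nonneg_left (hkey j) (abs_nonneg _)
        _ = (∑ j, |A i j|) * (300 * CM ^ 8 * τ ^ 3) := by rw [Finset.sum_mul]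
        _ ≤ SA * (300 * CM ^ 8 * τ ^ 3) := mul_le_mul_of_nonneg_right (hrowA i) hnn8
    calc |v i - v₀ - τ * ∑ j, A i j * (f₁ ((D1 *ᵥ vhat) j) * f₂ ((D2 *ᵥ v) j))|
        = |-(τ ^ 3 * (∑ j, A i j * QD j))
          - τ * ((∑ j, A i j * (f₁ ((D1 *ᵥ vhat) j) * f₂ ((D2 *ᵥ v) j))) - ∑ j, A i j * (f₁ v₀ * f₂ v₀ + τ * (deriv f₁ v₀ * f₂ v₀ * (f₁ v₀ * f₂ v₀ * p j) + f₁ v₀ * deriv f₂ v₀ * (f₁ v₀ * f₂ v₀ * q j)) + τ ^ 2 * (deriv f₁ v₀ * f₂ v₀ * (deriv f₁ v₀ * f₂ v₀ * (f₁ v₀ * f₂ v₀) * m1 j + f₁ v₀ * deriv f₂ v₀ * (f₁ v₀ * f₂ v₀) * m2 j) + f₁ v₀ * deriv f₂ v₀ * (deriv f₁ v₀ * f₂ v₀ * (f₁ v₀ * f₂ v₀) * n1 j + f₁ v₀ * deriv f₂ v₀ * (f₁ v₀ * f₂ v₀) * n2 j) + deriv (deriv f₁) v₀ / 2 * f₂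 v₀ * ((f₁ v₀ * f₂ v₀ * p j) * (f₁ v₀ * f₂ v₀ * p j)) + f₁ v₀ * (deriv (deriv f₂) v₀ / 2) * ((f₁ v₀ * f₂ v₀ * q j) * (f₁ v₀ * f₂ v₀ * q j)) + deriv f₁ v₀ * deriv f₂ v₀ * ((f₁ v₀ * f₂ v₀ * p j) * (f₁ v₀ * f₂ v₀ * q j)))))| := by rw [hres]
      _ = |(τ ^ 3 * (∑ j, A i j * QD j))
          + τ * ((∑ j, A i j * (f₁ ((D1 *ᵥ vhat) j) * f₂ ((D2 *ᵥ v) j))) - ∑ j, A i j * (f₁ v₀ * f₂ v₀ + τ * (deriv f₁ v₀ * f₂ v₀ * (f₁ v₀ * f₂ v₀ * p j) + f₁ v₀ * deriv f₂ v₀ * (f₁ v₀ * f₂ v₀ * q j)) + τ ^ 2 * (deriv f₁ v₀ * f₂ v₀ * (deriv f₁ v₀ * f₂ v₀ * (f₁ v₀ * f₂ v₀) * m1 j + f₁ v₀ * deriv f₂ v₀ * (f₁ v₀ * f₂ v₀) * m2 j) + f₁ v₀ * deriv f₂ v₀ * (deriv f₁ v₀ * f₂ v₀ * (f₁ v₀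 * f₂ v₀) * n1 j + f₁ v₀ * deriv f₂ v₀ * (f₁ v₀ * f₂ v₀) * n2 j) + deriv (deriv f₁) v₀ / 2 * f₂ v₀ * ((f₁ v₀ * f₂ v₀ * p j) * (f₁ v₀ * f₂ v₀ * p j)) + f₁ v₀ * (deriv (deriv f₂) v₀ / 2) * ((f₁ v₀ * f₂ v₀ * q j) * (f₁ v₀ * f₂ v₀ * q j)) + deriv f₁ v₀ * deriv f₂ v₀ * ((f₁ v₀ * f₂ v₀ * p j) * (f₁ v₀ * f₂ v₀ * q j)))))| := by
          rw [show -(τ ^ 3 * (∑ j, A i j * QD j))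
            - τ * ((∑ j, A i j * (f₁ ((D1 *ᵥ vhat) j) * f₂ ((D2 *ᵥ v) j))) - ∑ j, A i j * (f₁ v₀ * f₂ v₀ + τ * (deriv f₁ v₀ * f₂ v₀ * (f₁ v₀ * f₂ v₀ * p j) + f₁ v₀ * deriv f₂ v₀ * (f₁ v₀ * f₂ v₀ * q j)) + τ ^ 2 * (deriv f₁ v₀ * f₂ v₀ * (deriv f₁ v₀ * f₂ v₀ * (f₁ v₀ * f₂ v₀) * m1 j + f₁ v₀ * deriv f₂ v₀ * (f₁ v₀ * f₂ v₀) * m2 j) + f₁ v₀ * deriv f₂ v₀ * (deriv f₁ v₀ * f₂ v₀ * (f₁ v₀ * f₂ v₀) * n1 j + f₁ v₀ * deriv f₂ v₀ * (f₁ v₀ * f₂ v₀) * n2 j) + deriv (deriv f₁) v₀ / 2 * f₂ v₀ * ((f₁ v₀ * f₂ v₀ * p j) * (f₁ v₀ * f₂ v₀ * p j)) + f₁ v₀ * (deriv (deriv f₂) v₀ / 2) * ((f₁ v₀ * f₂ v₀ * q j) * (f₁ v₀ * f₂ v₀ * q j)) + deriv f₁ v₀ * deriv f₂ v₀ * ((f₁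 v₀ * f₂ v₀ * p j) * (f₁ v₀ * f₂ v₀ * q j)))))
            = -((τ ^ 3 * (∑ j, A i j * QD j))
            + τ * ((∑ j, A i j * (f₁ ((D1 *ᵥ vhat) j) * f₂ ((D2 *ᵥ v) j))) - ∑ j, A i j * (f₁ v₀ * f₂ v₀ + τ * (deriv f₁ v₀ * f₂ v₀ * (f₁ v₀ * f₂ v₀ * p j) + f₁ v₀ * deriv f₂ v₀ * (f₁ v₀ * f₂ v₀ * q j)) + τ ^ 2 * (deriv f₁ v₀ * f₂ v₀ * (deriv f₁ v₀ * f₂ v₀ * (f₁ v₀ * f₂ v₀) * m1 j + f₁ v₀ * deriv f₂ v₀ * (f₁ v₀ * f₂ v₀) * m2 j) + f₁ v₀ * deriv f₂ v₀ * (deriv f₁ v₀ * f₂ v₀ * (f₁ v₀ * f₂ v₀) * n1 j + f₁ v₀ * deriv f₂ v₀ * (f₁ v₀ * f₂ v₀) * n2 j) + deriv (deriv f₁) v₀ / 2 * f₂ v₀ * ((f₁ v₀ * f₂ v₀ * p j) * (f₁ v₀ * f₂ v₀ * p j)) + f₁ v₀ * (deriv (deriv f₂) v₀ / 2) * ((f₁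 v₀ * f₂ v₀ * q j) * (f₁ v₀ * f₂ v₀ * q j)) + deriv f₁ v₀ * deriv f₂ v₀ * ((f₁ v₀ * f₂ v₀ * p j) * (f₁ v₀ * f₂ v₀ * q j)))))) from by ring,
            abs_neg]
      _ ≤ |τ ^ 3 * (∑ j, A i j * QD j)|
          + |τ * ((∑ j, A i j * (f₁ ((D1 *ᵥ vhat) j) * f₂ ((D2 *ᵥ v) j))) - ∑ j, A i j * (f₁ v₀ * f₂ v₀ + τ * (deriv f₁ v₀ * f₂ v₀ * (f₁ v₀ * f₂ v₀ * p j) + f₁ v₀ * deriv f₂ v₀ * (f₁ v₀ * f₂ v₀ * q j)) + τ ^ 2 * (deriv f₁ v₀ * f₂ v₀ * (deriv f₁ v₀ * f₂ v₀ * (f₁ v₀ * f₂ v₀) * m1 j + f₁ v₀ * deriv f₂ v₀ * (f₁ v₀ * f₂ v₀) * m2 j) + f₁ v₀ * deriv f₂ v₀ * (deriv f₁ v₀ * f₂ v₀ * (f₁ v₀ * f₂ v₀) * n1 j + f₁ v₀ * deriv f₂ v₀ * (f₁ v₀ * f₂ v₀) * n2 j) + deriv (deriv f₁) v₀ / 2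 * f₂ v₀ * ((f₁ v₀ * f₂ v₀ * p j) * (f₁ v₀ * f₂ v₀ * p j)) + f₁ v₀ * (deriv (deriv f₂) v₀ / 2) * ((f₁ v₀ * f₂ v₀ * q j) * (f₁ v₀ * f₂ v₀ * q j)) + deriv f₁ v₀ * deriv f₂ v₀ * ((f₁ v₀ * f₂ v₀ * p j) * (f₁ v₀ * f₂ v₀ * q j)))))| := abs_add_le _ _
      _ ≤ τ ^ 3 * (SA * (5 * CM ^ 4)) + τ * (SA * (300 * CM ^ 8 * τ ^ 3)) := by
          refine add_le_add ?_ ?_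
          · rw [abs_mul, abs_pow, hτa]
            exact mul_le_mul_of_nonneg_left hAQDb (pow_nonneg hτ0.le 3)
          · rw [hdiffA, abs_mul, hτa]
            exact mul_le_mul_of_nonneg_left hAdel hτ0.le
      _ ≤ SA * (5 * CM ^ 4) * τ ^ 3 + SA * (300 * CM ^ 8) * τ ^ 3 := by
          refine add_le_add (le_of_eq (by ring)) ?_
          have e5 : τ * (SA * (300 * CM ^ 8 * τ ^ 3)) = SA * (300 * CM ^ 8) * (τ ^ 3 * τ) := by
            ring
          rw [e5]
          refine mul_le_mul_of_nonneg_left ?_ hCt4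
          calc τ ^ 3 * τ ≤ τ ^ 3 * 1 := mul_le_mul_of_nonneg_left hτ1 (pow_nonneg hτ0.le 3)
            _ = τ ^ 3 := mul_one _
      _ = (SA * (5 * CM ^ 4) + SA * (300 * CM ^ 8)) * τ ^ 3 := by ring
      _ ≤ C * τ ^ 3 := mul_le_mul_of_nonneg_right hle2 (pow_nonneg hτ0.le 3)
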